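/- If P and Q are finite posets on d elements having a common linear extension, then Ω(O_P, O_Q), Ω(O_P, C_Q), and Ω(C_P, C_Q) all have the same (d+1)-dimensional volume. -/

import Mathlib

def orderPolytope {d : ℕ} (r : Fin d → Fin d → Prop) : Set (Fin d → ℝ) :=
  {x | (∀ i, 0 ≤ x i ∧ x i ≤ 1) ∧ ∀ i j, r i j → x j ≤ x i}

def chainPolytope {d : ℕ} (r : Fin d → Fin d → Prop) : Set (Fin d → ℝ) :=
  {x | (∀ i, 0 ≤ x i) ∧
    ∀ c : Finset (Fin d), IsMaxChain r (c : Set (Fin d)) → ∑ i ∈ c, x i ≤ 1}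

def OmegaPoly {d : ℕ} (A B : Set (Fin d → ℝ)) : Set (Fin (d + 1) → ℝ) :=
  convexHull ℝ
    (((fun x => Fin.snoc x (1 : ℝ)) '' A) ∪ ((fun x => Fin.snoc (-x) (-1 : ℝ)) '' B))

open MeasureTheory

namespace OmegaVolAux

open Finset
open scoped Classical

variable {d : ℕ}

/-! ### basic max-fold -/

noncomputable def ups (lt : Fin d → Fin d → Prop) (i : Fin d) : Finset (Fin d) :=
  Finset.univ.filter fun j => lt i j

lemma mem_ups {lt : Fin d → Fin d → Prop} {i j : Fin d} : j ∈ ups lt i ↔ lt i j := by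
  simp [ups]

noncomputable def mfold (s : Finset (Fin d)) (f : Fin d → ℝ) : ℝ := s.fold max 0 f

lemma mfold_nonneg (s : Finset (Fin d)) (f : Fin d → ℝ) : 0 ≤ mfold s f := by
  exact (Finset.le_fold_max _).2 (Or.inl le_rfl)

lemma le_mfold {s : Finset (Fin d)} {f : Fin d → ℝ} {j : Fin d} (h : j ∈ s) :
    f j ≤ mfold s f := by
  exact (Finset.le_fold_max _).2 (Or.inr ⟨j, h, le_rfl⟩)

lemma mfold_le {s : Finset (Fin d)} {f : Fin d → ℝ} {c : ℝ} (h0 : 0 ≤ c)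
    (h : ∀ j ∈ s, f j ≤ c) : mfold s f ≤ c :=
  (Finset.fold_max_le _).2 ⟨h0, h⟩

lemma mfold_congr {s : Finset (Fin d)} {f g : Fin d → ℝ} (h : ∀ j ∈ s, f j = g j) :
    mfold s f = mfold s g :=
  Finset.fold_congr h

lemma mfold_mono {s : Finset (Fin d)} {f g : Fin d → ℝ} (h : ∀ j ∈ s, f j ≤ g j) :
    mfold s f ≤ mfold s g :=
  mfold_le (mfold_nonneg s g) (fun j hj => le_trans (h j hj) (le_mfold hj))

lemma mfold_cases (s : Finset (Fin d)) (f : Fin d → ℝ) :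
    mfold s f = 0 ∨ ∃ j ∈ s, mfold s f = f j := by
  classical
  induction s using Finset.induction_on with
  | empty => left; rfl
  | @insert j s hj ih =>
    rw [mfold, Finset.fold_insert_idem]
    rcases le_total (f j) (s.fold max 0 f) with h | h
    · rw [max_eq_right h]
      rcases ih with h' | ⟨k, hk, hk'⟩
      · left; exact h'
      · right; exact ⟨k, Finset.mem_insert_of_mem hk, hk'⟩
    · rw [max_eq_left h]
      right; exact ⟨j, Finset.mem_insert_self _ _, rfl⟩

/-- downward induction on a rank function -/
lemma rank_induction (rk : Fin d → ℕ) (hrk : ∀ i, rk i < d) (C : Fin d → Prop)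
    (step : ∀ i, (∀ j, rk i < rk j → C j) → C i) : ∀ i, C i := by
  suffices h : ∀ n i, d ≤ n + rk i → C i by
    intro i; exact h d i (by omega)
  intro n
  induction n with
  | zero => intro i hi; exact absurd hi (by have := hrk i; omega)
  | succ n ih =>
    intro i hi
    exact step i (fun j hj => ih j (by omega))

/-! ### the transfer map ψ -/

noncomputable def psiA (lt : Fin d → Fin d → Prop) (c : Fin d → ℝ) : ℕ → Fin d → ℝ
  | 0 => c
  | n+1 => fun i => c i + mfold (ups lt i) (psiA lt c n)

noncomputable def psi (lt : Fin d → Fin d → Prop) (c : Fin d → ℝ) : Fin d → ℝ :=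
  psiA lt c d

section PsiLemmas

variable {lt : Fin d → Fin d → Prop} {rk : Fin d → ℕ}

lemma psiA_stab (hrk : ∀ i, rk i < d) (hlt : ∀ i j, lt i j → rk i < rk j) (c : Fin d → ℝ) :
    ∀ n i, d ≤ n + rk i → psiA lt c (n+1) i = psiA lt c n i := by
  intro n
  induction n with
  | zero => intro i hi; exact absurd hi (by have := hrk i; omega)
  | succ n ih =>
    intro i hi
    show c i + _ = c i + _
    congr 1
    exact mfold_congr (fun j hj => ih j (by have := hlt i j (mem_ups.mp hj); omega))

lemma psi_unfold (hrk : ∀ i, rk i < d) (hlt : ∀ i j, lt i j → rk i < rk j) (c : Fin d → ℝ) (i : Fin d) :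
    psi lt c i = c i + mfold (ups lt i) (psi lt c) := by
  have h1 : psi lt c i = psiA lt c (d+1) i :=
    (psiA_stab hrk hlt c d i (by have := hrk i; omega)).symm
  rw [h1]; rfl

lemma psi_nonneg (hrk : ∀ i, rk i < d) (hlt : ∀ i j, lt i j → rk i < rk j) {c : Fin d → ℝ} (hc : ∀ i, 0 ≤ c i) (i : Fin d) : 0 ≤ psi lt c i := by
  rw [psi_unfold hrk hlt]
  exact add_nonneg (hc i) (mfold_nonneg _ _)

lemma self_le_psi (hrk : ∀ i, rk i < d) (hlt : ∀ i j, lt i j → rk i < rk j) (c : Fin d → ℝ) (i : Fin d) : c i ≤ psi lt c i := by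
  rw [psi_unfold hrk hlt]
  exact le_add_of_nonneg_right (mfold_nonneg _ _)

lemma psi_le_of_lt (hrk : ∀ i, rk i < d) (hlt : ∀ i j, lt i j → rk i < rk j) {c : Fin d → ℝ} (hc : ∀ i, 0 ≤ c i) {i j : Fin d} (hij : lt i j) :
    psi lt c j ≤ psi lt c i := by
  rw [psi_unfold hrk hlt c i]
  calc psi lt c j ≤ mfold (ups lt i) (psi lt c) := le_mfold (mem_ups.mpr hij)
    _ ≤ c i + mfold (ups lt i) (psi lt c) := le_add_of_nonneg_left (hc i)

lemma psi_mono {c c' : Fin d → ℝ} (h : ∀ i, c i ≤ c' i) (i : Fin d) :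
    psi lt c i ≤ psi lt c' i := by
  have : ∀ n i, psiA lt c n i ≤ psiA lt c' n i := by
    intro n
    induction n with
    | zero => exact h
    | succ n ih =>
      intro i
      exact add_le_add (h i) (mfold_mono (fun j _ => ih j))
  exact this d i

lemma psi_empty (c : Fin d → ℝ) (i : Fin d) :
    psi (fun _ _ => False) c i = c i := by
  have : ∀ n i, psiA (fun _ _ : Fin d => False) c n i = c i := by
    intro n
    induction n with
    | zero => intro i; rfl
    | succ n _ =>
      intro i
      show c i + mfold (ups _ i) _ = c i
      have : ups (fun _ _ : Fin d => False) i = ∅ := by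
        ext j; simp [mem_ups]
      rw [this]
      simp [mfold]
  exact this d i

end PsiLemmas

/-! ### chain characterization -/

section Chains

variable {lt le : Fin d → Fin d → Prop} {rk : Fin d → ℕ}

lemma psi_repr (hrk : ∀ i, rk i < d) (hlt : ∀ i j, lt i j → rk i < rk j)
    (hle : ∀ i j, le i j ↔ lt i j ∨ i = j) (htr : ∀ {i j k : Fin d}, lt i j → lt j k → lt i k) {c : Fin d → ℝ} :
    ∀ i, ∃ s : Finset (Fin d), i ∈ s ∧ (∀ j ∈ s, le i j) ∧ IsChain le (s : Set (Fin d)) ∧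
      psi lt c i = ∑ j ∈ s, c j := by
  apply rank_induction rk hrk
  intro i IH
  rcases mfold_cases (ups lt i) (psi lt c) with h0 | ⟨j0, hj0, hj0'⟩
  · refine ⟨{i}, by simp, ?_, ?_, ?_⟩
    · intro j hj
      simp only [Finset.mem_singleton] at hj
      exact (hle i j).mpr (Or.inr hj.symm)
    · simp only [Finset.coe_singleton]
      exact Set.Subsingleton.isChain (Set.subsingleton_singleton)
    · rw [psi_unfold hrk hlt, h0, add_zero, Finset.sum_singleton]
  · have hij0 : lt i j0 := mem_ups.mp hj0
    obtain ⟨s0, hmem, hup, hchain, hsum⟩ := IH j0 (hlt _ _ hij0)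
    have hle_i : ∀ j ∈ s0, le i j := by
      intro j hj
      rcases (hle j0 j).mp (hup j hj) with h | h
      · exact (hle i j).mpr (Or.inl (htr hij0 h))
      · exact (hle i j).mpr (Or.inl (h ▸ hij0))
    have hi_not : i ∉ s0 := by
      intro hin
      rcases (hle i i).mp (hle_i i hin) with h | _
      · exact absurd (hlt _ _ h) (lt_irrefl _)
      · have h2 := hup i hin
        rcases (hle j0 i).mp h2 with h | h
        · have := hlt _ _ h; have := hlt _ _ hij0; omega
        · subst h; exact absurd (hlt _ _ hij0) (lt_irrefl _)
    refine ⟨insert i s0, Finset.mem_insert_self _ _, ?_, ?_, ?_⟩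
    · intro j hj
      rcases Finset.mem_insert.mp hj with heq | hj
      · exact (hle i j).mpr (Or.inr heq.symm)
      · exact hle_i j hj
    · rw [Finset.coe_insert]
      apply hchain.insert
      intro b hb _
      exact Or.inl (hle_i b hb)
    · rw [psi_unfold hrk hlt, hj0', Finset.sum_insert hi_not, hsum]

lemma psi_le_of_chains (hrk : ∀ i, rk i < d) (hlt : ∀ i j, lt i j → rk i < rk j)
    (hle : ∀ i j, le i j ↔ lt i j ∨ i = j) (htr : ∀ {i j k : Fin d}, lt i j → lt j k → lt i k) {c : Fin d → ℝ} (hc : ∀ i, 0 ≤ c i) {lam : ℝ} (hlam : 0 ≤ lam)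
    (hch : ∀ s : Finset (Fin d), IsMaxChain le (s : Set (Fin d)) → ∑ j ∈ s, c j ≤ lam) :
    ∀ i, psi lt c i ≤ lam := by
  intro i
  obtain ⟨s, hmem, hup, hchain, hrepr⟩ := psi_repr hrk hlt hle htr i (c := c)
  obtain ⟨M, hM, hsub⟩ := hchain.exists_maxChain
  have hMfin : M.Finite := Set.toFinite M
  have hcoe : (hMfin.toFinset : Set (Fin d)) = M := hMfin.coe_toFinset
  rw [hrepr]
  have hst : s ⊆ hMfin.toFinset := by
    rw [← Finset.coe_subset, hcoe]
    exact hsub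
  calc ∑ j ∈ s, c j ≤ ∑ j ∈ hMfin.toFinset, c j :=
        Finset.sum_le_sum_of_subset_of_nonneg hst (fun j _ _ => hc j)
    _ ≤ lam := hch _ (by rw [hcoe]; exact hM)

lemma chains_le_of_psi (hrk : ∀ i, rk i < d) (hlt : ∀ i j, lt i j → rk i < rk j)
    (hle : ∀ i j, le i j ↔ lt i j ∨ i = j) {c : Fin d → ℝ} (hc : ∀ i, 0 ≤ c i) {lam : ℝ} (hlam : 0 ≤ lam)
    (hpsi : ∀ i, psi lt c i ≤ lam) :
    ∀ s : Finset (Fin d), IsMaxChain le (s : Set (Fin d)) → ∑ j ∈ s, c j ≤ lam := by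
  have hbot : ∀ s : Finset (Fin d), s.Nonempty → IsChain le (s : Set (Fin d)) →
      ∃ i ∈ s, ∀ j ∈ s, le i j := by
    intro s hne hchain
    obtain ⟨i, hi, hmin⟩ := Finset.exists_min_image s rk hne
    refine ⟨i, hi, ?_⟩
    intro j hj
    by_cases hij : i = j
    · exact (hle i j).mpr (Or.inr hij)
    · rcases hchain hi hj hij with h | h
      · exact h
      · rcases (hle j i).mp h with h' | h'
        · exact absurd (hmin j hj) (by have := hlt _ _ h'; omega)
        · exact (hle i j).mpr (Or.inr h'.symm)
  have key : ∀ s : Finset (Fin d), IsChain le (s : Set (Fin d)) →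
      ∀ i ∈ s, (∀ j ∈ s, le i j) → ∑ j ∈ s, c j ≤ psi lt c i := by
    intro s
    induction s using Finset.strongInduction with
    | _ s ih =>
      intro hchain i hi hup
      rcases Finset.eq_empty_or_nonempty (s.erase i) with hs | hs
      · have hseq : s = {i} := by
          apply Finset.eq_singleton_iff_unique_mem.mpr
          refine ⟨hi, fun x hx => ?_⟩
          by_contra hxi
          exact absurd (Finset.mem_erase.mpr ⟨hxi, hx⟩) (by rw [hs]; simp)
        rw [hseq, Finset.sum_singleton]
        exact self_le_psi hrk hlt c i
      · have hchain' : IsChain le ((s.erase i : Finset (Fin d)) : Set (Fin d)) := by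
          apply IsChain.mono ?_ hchain
          exact_mod_cast Finset.coe_subset.mpr (Finset.erase_subset _ _)
        obtain ⟨i', hi'mem, hup'⟩ := hbot (s.erase i) hs hchain'
        have hii' : lt i i' := by
          rcases (hle i i').mp (hup i' (Finset.mem_of_mem_erase hi'mem)) with h | h
          · exact h
          · exact absurd h.symm (Finset.ne_of_mem_erase hi'mem)
        have hrec := ih (s.erase i) (Finset.erase_ssubset hi) hchain' i' hi'mem hup'
        have hm : psi lt c i' ≤ mfold (ups lt i) (psi lt c) := le_mfold (mem_ups.mpr hii')
        calc ∑ j ∈ s, c j = c i + ∑ j ∈ s.erase i, c j := (Finset.add_sum_erase _ _ hi).symm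
          _ ≤ c i + mfold (ups lt i) (psi lt c) := by linarith
          _ = psi lt c i := (psi_unfold hrk hlt c i).symm
  intro s hs
  rcases Finset.eq_empty_or_nonempty s with hne | hne
  · simp [hne]; exact hlam
  · obtain ⟨i, hi, hup⟩ := hbot s hne hs.isChain
    exact le_trans (key s hs.isChain i hi hup) (hpsi i)

end Chains

/-! ### positive and negative parts -/

noncomputable def posP (x : Fin d → ℝ) : Fin d → ℝ := fun i => max (x i) 0
noncomputable def negP (x : Fin d → ℝ) : Fin d → ℝ := fun i => max (-x i) 0

lemma posP_nonneg (x : Fin d → ℝ) (i : Fin d) : 0 ≤ posP x i := le_max_right _ _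
lemma negP_nonneg (x : Fin d → ℝ) (i : Fin d) : 0 ≤ negP x i := le_max_right _ _
lemma posP_sub_negP (x : Fin d → ℝ) (i : Fin d) : posP x i - negP x i = x i := by
  simp only [posP, negP]
  rcases le_total (x i) 0 with h | h
  · rw [max_eq_right h, max_eq_left (by linarith)]; ring
  · rw [max_eq_left h, max_eq_right (by linarith)]; ring

/-! ### the two-sided recursion -/

noncomputable def abA (ltP ltQ : Fin d → Fin d → Prop) (y : Fin d → ℝ) : ℕ → Fin d → ℝ × ℝ
  | 0 => fun _ => (0, 0)
  | n+1 => fun i =>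
      (max (mfold (ups ltP i) (fun j => (abA ltP ltQ y n j).1))
          (y i + mfold (ups ltQ i) (fun j => (abA ltP ltQ y n j).2)),
       max (mfold (ups ltQ i) (fun j => (abA ltP ltQ y n j).2))
          (mfold (ups ltP i) (fun j => (abA ltP ltQ y n j).1) - y i))

variable (ltP ltQ : Fin d → Fin d → Prop)

noncomputable def aF (y : Fin d → ℝ) (i : Fin d) : ℝ := (abA ltP ltQ y d i).1
noncomputable def bF (y : Fin d → ℝ) (i : Fin d) : ℝ := (abA ltP ltQ y d i).2
noncomputable def Af (y : Fin d → ℝ) (i : Fin d) : ℝ := mfold (ups ltP i) (aF ltP ltQ y)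
noncomputable def Bf (y : Fin d → ℝ) (i : Fin d) : ℝ := mfold (ups ltQ i) (bF ltP ltQ y)

noncomputable def Hmap (y : Fin d → ℝ) : Fin d → ℝ :=
  fun i => y i - Af ltP ltQ y i + Bf ltP ltQ y i

noncomputable def Gmap (x : Fin d → ℝ) : Fin d → ℝ :=
  fun i => psi ltP (posP x) i - psi ltQ (negP x) i

section ABLemmas

variable {rk : Fin d → ℕ}
variable (hrk : ∀ i, rk i < d) (hP : ∀ i j, ltP i j → rk i < rk j)
  (hQ : ∀ i j, ltQ i j → rk i < rk j)

include hrk hP hQ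

lemma abA_stab (y : Fin d → ℝ) :
    ∀ n i, d ≤ n + rk i → abA ltP ltQ y (n+1) i = abA ltP ltQ y n i := by
  intro n
  induction n with
  | zero => intro i hi; exact absurd hi (by have := hrk i; omega)
  | succ n ih =>
    intro i _
    show (max (mfold _ _) _, max _ _) = (max (mfold _ _) _, max _ _)
    have h1 : mfold (ups ltP i) (fun j => (abA ltP ltQ y (n+1) j).1)
        = mfold (ups ltP i) (fun j => (abA ltP ltQ y n j).1) := by
      apply mfold_congr
      intro j hj
      rw [ih j (by have := hP i j (mem_ups.mp hj); omega)]
    have h2 : mfold (ups ltQ i) (fun j => (abA ltP ltQ y (n+1) j).2)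
        = mfold (ups ltQ i) (fun j => (abA ltP ltQ y n j).2) := by
      apply mfold_congr
      intro j hj
      rw [ih j (by have := hQ i j (mem_ups.mp hj); omega)]
    rw [h1, h2]

lemma aF_eq (y : Fin d → ℝ) (i : Fin d) :
    aF ltP ltQ y i = max (Af ltP ltQ y i) (y i + Bf ltP ltQ y i) := by
  have h : aF ltP ltQ y i = (abA ltP ltQ y (d+1) i).1 := by
    rw [abA_stab ltP ltQ hrk hP hQ y d i (by have := hrk i; omega)]; rfl
  rw [h]; rfl

lemma bF_eq (y : Fin d → ℝ) (i : Fin d) :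
    bF ltP ltQ y i = max (Bf ltP ltQ y i) (Af ltP ltQ y i - y i) := by
  have h : bF ltP ltQ y i = (abA ltP ltQ y (d+1) i).2 := by
    rw [abA_stab ltP ltQ hrk hP hQ y d i (by have := hrk i; omega)]; rfl
  rw [h]; rfl

lemma aF_sub_bF (y : Fin d → ℝ) (i : Fin d) :
    aF ltP ltQ y i - bF ltP ltQ y i = y i := by
  rw [aF_eq ltP ltQ hrk hP hQ, bF_eq ltP ltQ hrk hP hQ]
  rcases le_total (Af ltP ltQ y i) (y i + Bf ltP ltQ y i) with h | h
  · rw [max_eq_right h, max_eq_left (by linarith)]; ring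
  · rw [max_eq_left h, max_eq_right (by linarith)]; ring

lemma posP_Hmap (y : Fin d → ℝ) (i : Fin d) :
    posP (Hmap ltP ltQ y) i = aF ltP ltQ y i - Af ltP ltQ y i := by
  simp only [posP, Hmap]
  rw [aF_eq ltP ltQ hrk hP hQ]
  rcases le_total (Af ltP ltQ y i) (y i + Bf ltP ltQ y i) with h | h
  · rw [max_eq_right h, max_eq_left (by linarith)]; ring
  · rw [max_eq_left h, max_eq_right (by linarith)]; ring

lemma negP_Hmap (y : Fin d → ℝ) (i : Fin d) :
    negP (Hmap ltP ltQ y) i = bF ltP ltQ y i - Bf ltP ltQ y i := by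
  simp only [negP, Hmap]
  rw [bF_eq ltP ltQ hrk hP hQ]
  rcases le_total (Bf ltP ltQ y i) (Af ltP ltQ y i - y i) with h | h
  · rw [max_eq_right h, max_eq_left (by linarith)]; ring
  · rw [max_eq_left h, max_eq_right (by linarith)]; ring

/-- the inverse recursion reconstructs the transfer values -/
lemma K1 (y : Fin d → ℝ) :
    ∀ i, psi ltP (posP (Hmap ltP ltQ y)) i = aF ltP ltQ y i ∧
      psi ltQ (negP (Hmap ltP ltQ y)) i = bF ltP ltQ y i := by
  apply rank_induction rk hrk
  intro i IH
  constructor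
  · rw [psi_unfold hrk hP, posP_Hmap ltP ltQ hrk hP hQ]
    have : mfold (ups ltP i) (psi ltP (posP (Hmap ltP ltQ y)))
        = Af ltP ltQ y i := by
      apply mfold_congr
      intro j hj
      exact (IH j (hP i j (mem_ups.mp hj))).1
    rw [this]
    ring
  · rw [psi_unfold hrk hQ, negP_Hmap ltP ltQ hrk hP hQ]
    have : mfold (ups ltQ i) (psi ltQ (negP (Hmap ltP ltQ y)))
        = Bf ltP ltQ y i := by
      apply mfold_congr
      intro j hj
      exact (IH j (hQ i j (mem_ups.mp hj))).2
    rw [this]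
    ring

lemma Gmap_Hmap (y : Fin d → ℝ) : Gmap ltP ltQ (Hmap ltP ltQ y) = y := by
  funext i
  show psi ltP (posP (Hmap ltP ltQ y)) i - psi ltQ (negP (Hmap ltP ltQ y)) i = y i
  rw [(K1 ltP ltQ hrk hP hQ y i).1, (K1 ltP ltQ hrk hP hQ y i).2]
  exact aF_sub_bF ltP ltQ hrk hP hQ y i

lemma K2 (x : Fin d → ℝ) :
    ∀ i, aF ltP ltQ (Gmap ltP ltQ x) i = psi ltP (posP x) i ∧
      bF ltP ltQ (Gmap ltP ltQ x) i = psi ltQ (negP x) i := by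
  apply rank_induction rk hrk
  intro i IH
  set y := Gmap ltP ltQ x with hy
  have hAf : Af ltP ltQ y i = mfold (ups ltP i) (psi ltP (posP x)) := by
    apply mfold_congr
    intro j hj
    exact (IH j (hP i j (mem_ups.mp hj))).1
  have hBf : Bf ltP ltQ y i = mfold (ups ltQ i) (psi ltQ (negP x)) := by
    apply mfold_congr
    intro j hj
    exact (IH j (hQ i j (mem_ups.mp hj))).2
  have hyi : y i = psi ltP (posP x) i - psi ltQ (negP x) i := rfl
  have hPu : psi ltP (posP x) i = posP x i + mfold (ups ltP i) (psi ltP (posP x)) :=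
    psi_unfold hrk hP _ _
  have hQu : psi ltQ (negP x) i = negP x i + mfold (ups ltQ i) (psi ltQ (negP x)) :=
    psi_unfold hrk hQ _ _
  have hpn : posP x i - negP x i = x i := posP_sub_negP x i
  have hcase : (negP x i = 0 ∧ 0 ≤ posP x i) ∨ (posP x i = 0 ∧ 0 ≤ negP x i) := by
    simp only [posP, negP]
    rcases le_total (x i) 0 with h | h
    · right; constructor
      · rw [max_eq_right h]
      · exact le_max_right _ _
    · left; constructor
      · rw [max_eq_right (by linarith)]
      · exact le_max_right _ _
  constructor
  · rw [aF_eq ltP ltQ hrk hP hQ, hAf, hBf, hyi, hPu, hQu]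
    rcases hcase with ⟨h0, hpos⟩ | ⟨h0, hneg⟩
    · rw [h0]
      rw [max_eq_right (by linarith)]
      ring
    · rw [h0]
      rw [max_eq_left (by linarith)]
      ring
  · rw [bF_eq ltP ltQ hrk hP hQ, hAf, hBf, hyi, hPu, hQu]
    rcases hcase with ⟨h0, hpos⟩ | ⟨h0, hneg⟩
    · rw [h0]
      rw [max_eq_left (by linarith)]
      ring
    · rw [h0]
      rw [max_eq_right (by linarith)]
      ring

lemma Hmap_Gmap (x : Fin d → ℝ) : Hmap ltP ltQ (Gmap ltP ltQ x) = x := by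
  funext i
  have hAf : Af ltP ltQ (Gmap ltP ltQ x) i = mfold (ups ltP i) (psi ltP (posP x)) := by
    apply mfold_congr
    intro j hj
    exact (K2 ltP ltQ hrk hP hQ x j).1
  have hBf : Bf ltP ltQ (Gmap ltP ltQ x) i = mfold (ups ltQ i) (psi ltQ (negP x)) := by
    apply mfold_congr
    intro j hj
    exact (K2 ltP ltQ hrk hP hQ x j).2
  have hPu := psi_unfold hrk hP (posP x) i
  have hQu := psi_unfold hrk hQ (negP x) i
  have hpn := posP_sub_negP x i
  show Gmap ltP ltQ x i - _ + _ = x i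
  rw [hAf, hBf]
  have hyi : Gmap ltP ltQ x i = psi ltP (posP x) i - psi ltQ (negP x) i := rfl
  rw [hyi]
  linarith

/-- the fundamental inequality: decomposition bounds -/
lemma INV {u v y : Fin d → ℝ} (hu0 : ∀ i, 0 ≤ u i) (hv0 : ∀ i, 0 ≤ v i)
    (hu : ∀ i j, ltP i j → u j ≤ u i) (hv : ∀ i j, ltQ i j → v j ≤ v i)
    (hy : ∀ i, y i = u i - v i) :
    ∀ i, aF ltP ltQ y i ≤ u i ∧ bF ltP ltQ y i ≤ v i := by
  apply rank_induction rk hrk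
  intro i IH
  have hA : Af ltP ltQ y i ≤ u i := by
    apply mfold_le (hu0 i)
    intro j hj
    exact le_trans (IH j (hP i j (mem_ups.mp hj))).1 (hu i j (mem_ups.mp hj))
  have hB : Bf ltP ltQ y i ≤ v i := by
    apply mfold_le (hv0 i)
    intro j hj
    exact le_trans (IH j (hQ i j (mem_ups.mp hj))).2 (hv i j (mem_ups.mp hj))
  constructor
  · rw [aF_eq ltP ltQ hrk hP hQ]
    apply max_le hA
    rw [hy i]
    linarith
  · rw [bF_eq ltP ltQ hrk hP hQ]
    apply max_le hB
    rw [hy i]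
    linarith

end ABLemmas


/-! ### polytope basics -/

lemma convex_orderPolytope (r : Fin d → Fin d → Prop) : Convex ℝ (orderPolytope r) := by
  intro x hx y hy p q hp hq hpq
  obtain ⟨hx1, hx2⟩ := hx
  obtain ⟨hy1, hy2⟩ := hy
  constructor
  · intro i
    have h1 := (hx1 i).1; have h2 := (hx1 i).2
    have h3 := (hy1 i).1; have h4 := (hy1 i).2
    constructor
    · have : (p • x + q • y) i = p * x i + q * y i := rfl
      rw [this]; nlinarith
    · have : (p • x + q • y) i = p * x i + q * y i := rfl
      rw [this]; nlinarith
  · intro i j hij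
    have h1 := hx2 i j hij
    have h2 := hy2 i j hij
    have e1 : (p • x + q • y) i = p * x i + q * y i := rfl
    have e2 : (p • x + q • y) j = p * x j + q * y j := rfl
    rw [e1, e2]; nlinarith

lemma convex_chainPolytope (r : Fin d → Fin d → Prop) : Convex ℝ (chainPolytope r) := by
  intro x hx y hy p q hp hq hpq
  obtain ⟨hx1, hx2⟩ := hx
  obtain ⟨hy1, hy2⟩ := hy
  constructor
  · intro i
    have : (p • x + q • y) i = p * x i + q * y i := rfl
    rw [this]
    have := hx1 i; have := hy1 i
    nlinarith
  · intro c hc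
    have e : ∀ i, (p • x + q • y) i = p * x i + q * y i := fun i => rfl
    calc ∑ i ∈ c, (p • x + q • y) i = ∑ i ∈ c, (p * x i + q * y i) := by
          exact Finset.sum_congr rfl (fun i _ => e i)
      _ = p * ∑ i ∈ c, x i + q * ∑ i ∈ c, y i := by
          rw [Finset.sum_add_distrib, Finset.mul_sum, Finset.mul_sum]
      _ ≤ p * 1 + q * 1 := by
          have h1 := hx2 c hc; have h2 := hy2 c hc
          have : p * ∑ i ∈ c, x i ≤ p * 1 := by nlinarith
          have : q * ∑ i ∈ c, y i ≤ q * 1 := by nlinarith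
          linarith
      _ = 1 := by linarith

lemma zero_mem_orderPolytope (r : Fin d → Fin d → Prop) : (0 : Fin d → ℝ) ∈ orderPolytope r := by
  refine ⟨fun i => ⟨le_rfl, zero_le_one⟩, fun i j _ => le_rfl⟩

lemma zero_mem_chainPolytope (r : Fin d → Fin d → Prop) : (0 : Fin d → ℝ) ∈ chainPolytope r := by
  refine ⟨fun i => le_rfl, fun c _ => ?_⟩
  simp

lemma exists_scaled_comb {A : Set (Fin d → ℝ)} (hA : Convex ℝ A) {a1 a2 : Fin d → ℝ}
    (ha1 : a1 ∈ A) (ha2 : a2 ∈ A) {c1 c2 : ℝ} (h1 : 0 ≤ c1) (h2 : 0 ≤ c2) :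
    ∃ a ∈ A, ∀ i, (c1 + c2) * a i = c1 * a1 i + c2 * a2 i := by
  rcases eq_or_lt_of_le (add_nonneg h1 h2) with hc | hc
  · have hc1 : c1 = 0 := by linarith
    have hc2 : c2 = 0 := by linarith
    exact ⟨a1, ha1, fun i => by rw [hc1, hc2]; ring⟩
  · set t := c1 + c2
    have ht : 0 < t := hc
    refine ⟨(c1/t) • a1 + (c2/t) • a2, ?_, ?_⟩
    · apply hA ha1 ha2 (div_nonneg h1 ht.le) (div_nonneg h2 ht.le)
      field_simp
      rfl
    · intro i
      have : ((c1/t) • a1 + (c2/t) • a2) i = (c1/t) * a1 i + (c2/t) * a2 i := rfl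
      rw [this]
      field_simp

/-! ### slice description of OmegaPoly -/

lemma mem_OmegaPoly_iff {A B : Set (Fin d → ℝ)} (hA : Convex ℝ A) (hB : Convex ℝ B)
    (hAne : A.Nonempty) (hBne : B.Nonempty) (z : Fin (d+1) → ℝ) :
    z ∈ OmegaPoly A B ↔ ∃ l m : ℝ, 0 ≤ l ∧ 0 ≤ m ∧ l + m = 1 ∧ z (Fin.last d) = l - m ∧
      ∃ a ∈ A, ∃ b ∈ B, ∀ i : Fin d, z (Fin.castSucc i) = l * a i - m * b i := by
  set S : Set (Fin (d+1) → ℝ) := {z | ∃ l m : ℝ, 0 ≤ l ∧ 0 ≤ m ∧ l + m = 1 ∧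
      z (Fin.last d) = l - m ∧
      ∃ a ∈ A, ∃ b ∈ B, ∀ i : Fin d, z (Fin.castSucc i) = l * a i - m * b i} with hS
  have hconv : Convex ℝ S := by
    intro z1 hz1 z2 hz2 p q hp hq hpq
    obtain ⟨l1, m1, hl1, hm1, hlm1, hz1l, a1, ha1, b1, hb1, hid1⟩ := hz1
    obtain ⟨l2, m2, hl2, hm2, hlm2, hz2l, a2, ha2, b2, hb2, hid2⟩ := hz2
    obtain ⟨a, ha, hida⟩ := exists_scaled_comb hA ha1 ha2
      (mul_nonneg hp hl1) (mul_nonneg hq hl2)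
    obtain ⟨b, hb, hidb⟩ := exists_scaled_comb hB hb1 hb2
      (mul_nonneg hp hm1) (mul_nonneg hq hm2)
    refine ⟨p * l1 + q * l2, p * m1 + q * m2,
      by positivity, by positivity, by nlinarith, ?_, a, ha, b, hb, ?_⟩
    · have : (p • z1 + q • z2) (Fin.last d) = p * z1 (Fin.last d) + q * z2 (Fin.last d) := rfl
      rw [this, hz1l, hz2l]; ring
    · intro i
      have : (p • z1 + q • z2) (Fin.castSucc i)
          = p * z1 (Fin.castSucc i) + q * z2 (Fin.castSucc i) := rfl
      rw [this, hid1 i, hid2 i, hida i, hidb i]; ring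
  constructor
  · intro hz
    have hsub : OmegaPoly A B ⊆ S := by
      apply convexHull_min _ hconv
      rintro w (⟨a, ha, rfl⟩ | ⟨b, hb, rfl⟩)
      · obtain ⟨b, hb⟩ := hBne
        refine ⟨1, 0, zero_le_one, le_rfl, by ring, ?_, a, ha, b, hb, ?_⟩
        · show (Fin.snoc a (1:ℝ) : Fin (d+1) → ℝ) (Fin.last d) = 1 - 0
          rw [Fin.snoc_last]; ring
        · intro i
          show (Fin.snoc a (1:ℝ) : Fin (d+1) → ℝ) (Fin.castSucc i) = 1 * a i - 0 * b i
          rw [Fin.snoc_castSucc]; ring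
      · obtain ⟨a, ha⟩ := hAne
        refine ⟨0, 1, le_rfl, zero_le_one, by ring, ?_, a, ha, b, hb, ?_⟩
        · show (Fin.snoc (-b) (-1:ℝ) : Fin (d+1) → ℝ) (Fin.last d) = 0 - 1
          rw [Fin.snoc_last]; ring
        · intro i
          show (Fin.snoc (-b) (-1:ℝ) : Fin (d+1) → ℝ) (Fin.castSucc i) = 0 * a i - 1 * b i
          rw [Fin.snoc_castSucc]
          have : (-b) i = -(b i) := rfl
          rw [this]; ring
    exact hsub hz
  · rintro ⟨l, m, hl, hm, hlm, hzl, a, ha, b, hb, hid⟩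
    have h1 : (Fin.snoc a (1:ℝ) : Fin (d+1) → ℝ) ∈ OmegaPoly A B :=
      subset_convexHull ℝ _ (Set.mem_union_left _ ⟨a, ha, rfl⟩)
    have h2 : (Fin.snoc (-b) (-1:ℝ) : Fin (d+1) → ℝ) ∈ OmegaPoly A B :=
      subset_convexHull ℝ _ (Set.mem_union_right _ ⟨b, hb, rfl⟩)
    have hz : z = l • (Fin.snoc a (1:ℝ) : Fin (d+1) → ℝ)
        + m • (Fin.snoc (-b) (-1:ℝ) : Fin (d+1) → ℝ) := by
      funext k
      have e : (l • (Fin.snoc a (1:ℝ) : Fin (d+1) → ℝ)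
          + m • (Fin.snoc (-b) (-1:ℝ) : Fin (d+1) → ℝ)) k
          = l * (Fin.snoc a (1:ℝ) : Fin (d+1) → ℝ) k
            + m * (Fin.snoc (-b) (-1:ℝ) : Fin (d+1) → ℝ) k := rfl
      rw [e]
      induction k using Fin.lastCases with
      | last =>
        rw [Fin.snoc_last, Fin.snoc_last, hzl]; ring
      | cast i =>
        rw [Fin.snoc_castSucc, Fin.snoc_castSucc, hid i]
        have : (-b) i = -(b i) := rfl
        rw [this]; ring
    rw [hz]
    exact convex_convexHull ℝ _ h1 h2 hl hm hlm


/-! ### scaled membership -/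

lemma order_scale_iff (leP : Fin d → Fin d → Prop) {l : ℝ} (hl : 0 ≤ l) (u : Fin d → ℝ) :
    (∃ a ∈ orderPolytope leP, ∀ i, u i = l * a i) ↔
      ((∀ i, 0 ≤ u i ∧ u i ≤ l) ∧ ∀ i j, leP i j → u j ≤ u i) := by
  constructor
  · rintro ⟨a, ⟨ha1, ha2⟩, hid⟩
    refine ⟨fun i => ?_, fun i j hij => ?_⟩
    · rw [hid i]
      have := (ha1 i).1; have := (ha1 i).2
      constructor
      · positivity
      · nlinarith
    · rw [hid i, hid j]
      have := ha2 i j hij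
      nlinarith
  · rintro ⟨hu, humono⟩
    rcases eq_or_lt_of_le hl with hl0 | hl0
    · refine ⟨0, zero_mem_orderPolytope leP, fun i => ?_⟩
      have h1 := (hu i).1; have h2 := (hu i).2
      have : u i = 0 := le_antisymm (by rw [hl0]; exact h2) h1
      simp [this]
    · refine ⟨fun i => u i / l, ⟨fun i => ⟨?_, ?_⟩, fun i j hij => ?_⟩, fun i => ?_⟩
      · exact div_nonneg (hu i).1 hl0.le
      · rw [div_le_one hl0]; exact (hu i).2
      · exact (div_le_div_iff_of_pos_right hl0).mpr (humono i j hij)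
      · field_simp

lemma chain_scale_iff {lt le : Fin d → Fin d → Prop} {rk : Fin d → ℕ}
    (hrk : ∀ i, rk i < d) (hlt : ∀ i j, lt i j → rk i < rk j)
    (hle : ∀ i j, le i j ↔ lt i j ∨ i = j)
    (htr : ∀ {i j k : Fin d}, lt i j → lt j k → lt i k)
    {m : ℝ} (hm : 0 ≤ m) (v : Fin d → ℝ) :
    (∃ b ∈ chainPolytope le, ∀ i, v i = m * b i) ↔
      ((∀ i, 0 ≤ v i) ∧ ∀ i, psi lt v i ≤ m) := by
  constructor
  · rintro ⟨b, ⟨hb1, hb2⟩, hid⟩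
    have hv0 : ∀ i, 0 ≤ v i := by
      intro i; rw [hid i]
      exact mul_nonneg hm (hb1 i)
    refine ⟨hv0, psi_le_of_chains hrk hlt hle htr hv0 hm ?_⟩
    intro s hs
    have : ∑ j ∈ s, v j = m * ∑ j ∈ s, b j := by
      rw [Finset.mul_sum]
      exact Finset.sum_congr rfl (fun j _ => hid j)
    rw [this]
    have := hb2 s hs
    nlinarith
  · rintro ⟨hv0, hpsi⟩
    rcases eq_or_lt_of_le hm with hm0 | hm0
    · refine ⟨0, zero_mem_chainPolytope le, fun i => ?_⟩
      have h1 : v i ≤ 0 := le_trans (self_le_psi hrk hlt v i) (by rw [hm0]; exact hpsi i)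
      have : v i = 0 := le_antisymm h1 (hv0 i)
      simp [this]
    · refine ⟨fun i => v i / m, ⟨fun i => div_nonneg (hv0 i) hm0.le, fun s hs => ?_⟩, fun i => ?_⟩
      · have hsum : ∑ j ∈ s, v j / m = (∑ j ∈ s, v j) / m := by
          rw [Finset.sum_div]
        rw [hsum, div_le_one hm0]
        exact chains_le_of_psi hrk hlt hle hv0 hm hpsi s hs
      · field_simp

/-! ### slice sets -/

noncomputable def lamZ (z : Fin (d+1) → ℝ) : ℝ := (1 + z (Fin.last d)) / 2
noncomputable def muZ (z : Fin (d+1) → ℝ) : ℝ := (1 - z (Fin.last d)) / 2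
def initZ (z : Fin (d+1) → ℝ) : Fin d → ℝ := fun i => z (Fin.castSucc i)

def SOset (leP leQ : Fin d → Fin d → Prop) : Set (Fin (d+1) → ℝ) :=
  {z | 0 ≤ lamZ z ∧ 0 ≤ muZ z ∧ ∃ u v : Fin d → ℝ,
    (∀ i, 0 ≤ u i ∧ u i ≤ lamZ z) ∧ (∀ i j, leP i j → u j ≤ u i) ∧
    (∀ i, 0 ≤ v i ∧ v i ≤ muZ z) ∧ (∀ i j, leQ i j → v j ≤ v i) ∧
    (∀ i, initZ z i = u i - v i)}

def SMset (leP ltQ : Fin d → Fin d → Prop) : Set (Fin (d+1) → ℝ) :=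
  {z | 0 ≤ lamZ z ∧ 0 ≤ muZ z ∧ ∃ u v : Fin d → ℝ,
    (∀ i, 0 ≤ u i ∧ u i ≤ lamZ z) ∧ (∀ i j, leP i j → u j ≤ u i) ∧
    (∀ i, 0 ≤ v i) ∧ (∀ i, psi ltQ v i ≤ muZ z) ∧
    (∀ i, initZ z i = u i - v i)}

def SCset (ltP ltQ : Fin d → Fin d → Prop) : Set (Fin (d+1) → ℝ) :=
  {z | 0 ≤ lamZ z ∧ 0 ≤ muZ z ∧ (∀ i, psi ltP (posP (initZ z)) i ≤ lamZ z) ∧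
    (∀ i, psi ltQ (negP (initZ z)) i ≤ muZ z)}

section SetEq

variable {ltP ltQ leP leQ : Fin d → Fin d → Prop} {rk : Fin d → ℕ}

lemma lam_mu_eq {z : Fin (d+1) → ℝ} {l m : ℝ} (hlm : l + m = 1) (hzl : z (Fin.last d) = l - m) :
    lamZ z = l ∧ muZ z = m := by
  constructor <;> (simp only [lamZ, muZ]; rw [hzl]; linarith)

lemma OmegaOO_eq : OmegaPoly (orderPolytope leP) (orderPolytope leQ) = SOset leP leQ := by
  ext z
  rw [mem_OmegaPoly_iff (convex_orderPolytope leP) (convex_orderPolytope leQ)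
    ⟨0, zero_mem_orderPolytope leP⟩ ⟨0, zero_mem_orderPolytope leQ⟩]
  constructor
  · rintro ⟨l, m, hl, hm, hlm, hzl, a, ha, b, hb, hid⟩
    obtain ⟨hlam, hmu⟩ := lam_mu_eq hlm hzl
    have hu := (order_scale_iff leP hl (fun i => l * a i)).mp ⟨a, ha, fun i => rfl⟩
    have hv := (order_scale_iff leQ hm (fun i => m * b i)).mp ⟨b, hb, fun i => rfl⟩
    refine ⟨by rw [hlam]; exact hl, by rw [hmu]; exact hm,
      fun i => l * a i, fun i => m * b i, by rw [hlam]; exact hu.1, hu.2,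
      by rw [hmu]; exact hv.1, hv.2, fun i => hid i⟩
  · rintro ⟨h1, h2, u, v, hu, humono, hv, hvmono, hid⟩
    obtain ⟨a, ha, hau⟩ := (order_scale_iff leP h1 u).mpr ⟨hu, humono⟩
    obtain ⟨b, hb, hbv⟩ := (order_scale_iff leQ h2 v).mpr ⟨hv, hvmono⟩
    refine ⟨lamZ z, muZ z, h1, h2, by simp [lamZ, muZ]; ring, by simp [lamZ, muZ]; ring,
      a, ha, b, hb, fun i => ?_⟩
    rw [← hau i, ← hbv i]
    exact hid i

lemma OmegaOC_eq (hrk : ∀ i, rk i < d) (hQ : ∀ i j, ltQ i j → rk i < rk j)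
    (hleQ : ∀ i j, leQ i j ↔ ltQ i j ∨ i = j)
    (htrQ : ∀ {i j k : Fin d}, ltQ i j → ltQ j k → ltQ i k) :
    OmegaPoly (orderPolytope leP) (chainPolytope leQ) = SMset leP ltQ := by
  ext z
  rw [mem_OmegaPoly_iff (convex_orderPolytope leP) (convex_chainPolytope leQ)
    ⟨0, zero_mem_orderPolytope leP⟩ ⟨0, zero_mem_chainPolytope leQ⟩]
  constructor
  · rintro ⟨l, m, hl, hm, hlm, hzl, a, ha, b, hb, hid⟩
    obtain ⟨hlam, hmu⟩ := lam_mu_eq hlm hzl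
    have hu := (order_scale_iff leP hl (fun i => l * a i)).mp ⟨a, ha, fun i => rfl⟩
    have hv := (chain_scale_iff hrk hQ hleQ htrQ hm (fun i => m * b i)).mp
      ⟨b, hb, fun i => rfl⟩
    refine ⟨by rw [hlam]; exact hl, by rw [hmu]; exact hm,
      fun i => l * a i, fun i => m * b i, by rw [hlam]; exact hu.1, hu.2,
      hv.1, by rw [hmu]; exact hv.2, fun i => hid i⟩
  · rintro ⟨h1, h2, u, v, hu, humono, hv0, hpsiv, hid⟩
    obtain ⟨a, ha, hau⟩ := (order_scale_iff leP h1 u).mpr ⟨hu, humono⟩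
    obtain ⟨b, hb, hbv⟩ := (chain_scale_iff hrk hQ hleQ htrQ h2 v).mpr ⟨hv0, hpsiv⟩
    refine ⟨lamZ z, muZ z, h1, h2, by simp [lamZ, muZ]; ring, by simp [lamZ, muZ]; ring,
      a, ha, b, hb, fun i => ?_⟩
    rw [← hau i, ← hbv i]
    exact hid i

lemma OmegaCC_eq (hrk : ∀ i, rk i < d)
    (hP : ∀ i j, ltP i j → rk i < rk j) (hQ : ∀ i j, ltQ i j → rk i < rk j)
    (hleP : ∀ i j, leP i j ↔ ltP i j ∨ i = j) (hleQ : ∀ i j, leQ i j ↔ ltQ i j ∨ i = j)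
    (htrP : ∀ {i j k : Fin d}, ltP i j → ltP j k → ltP i k)
    (htrQ : ∀ {i j k : Fin d}, ltQ i j → ltQ j k → ltQ i k) :
    OmegaPoly (chainPolytope leP) (chainPolytope leQ) = SCset ltP ltQ := by
  ext z
  rw [mem_OmegaPoly_iff (convex_chainPolytope leP) (convex_chainPolytope leQ)
    ⟨0, zero_mem_chainPolytope leP⟩ ⟨0, zero_mem_chainPolytope leQ⟩]
  constructor
  · rintro ⟨l, m, hl, hm, hlm, hzl, a, ha, b, hb, hid⟩
    obtain ⟨hlam, hmu⟩ := lam_mu_eq hlm hzl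
    have hu := (chain_scale_iff hrk hP hleP htrP hl (fun i => l * a i)).mp
      ⟨a, ha, fun i => rfl⟩
    have hv := (chain_scale_iff hrk hQ hleQ htrQ hm (fun i => m * b i)).mp
      ⟨b, hb, fun i => rfl⟩
    refine ⟨by rw [hlam]; exact hl, by rw [hmu]; exact hm, fun i => ?_, fun i => ?_⟩
    · rw [hlam]
      refine le_trans (psi_mono (fun i => ?_) i) (hu.2 i)
      simp only [posP, initZ]
      apply max_le
      · rw [hid i]
        have := hv.1 i
        linarith
      · exact hu.1 i
    · rw [hmu]
      refine le_trans (psi_mono (fun i => ?_) i) (hv.2 i)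
      simp only [negP, initZ]
      apply max_le
      · rw [hid i]
        have := hu.1 i
        linarith
      · exact hv.1 i
  · rintro ⟨h1, h2, hpsiP, hpsiQ⟩
    obtain ⟨a, ha, hau⟩ := (chain_scale_iff hrk hP hleP htrP h1 (posP (initZ z))).mpr
      ⟨posP_nonneg _, hpsiP⟩
    obtain ⟨b, hb, hbv⟩ := (chain_scale_iff hrk hQ hleQ htrQ h2 (negP (initZ z))).mpr
      ⟨negP_nonneg _, hpsiQ⟩
    refine ⟨lamZ z, muZ z, h1, h2, by simp [lamZ, muZ]; ring, by simp [lamZ, muZ]; ring,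
      a, ha, b, hb, fun i => ?_⟩
    rw [← hau i, ← hbv i]
    exact (posP_sub_negP (initZ z) i).symm

end SetEq

/-! ### the lifted map and the transfer identities -/

noncomputable def Hhat (ltP ltQ : Fin d → Fin d → Prop) (z : Fin (d+1) → ℝ) :
    Fin (d+1) → ℝ :=
  Fin.snoc (Hmap ltP ltQ (initZ z)) (z (Fin.last d))

noncomputable def Ghat (ltP ltQ : Fin d → Fin d → Prop) (z : Fin (d+1) → ℝ) :
    Fin (d+1) → ℝ :=
  Fin.snoc (Gmap ltP ltQ (initZ z)) (z (Fin.last d))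

section HhatLemmas

variable (ltP ltQ : Fin d → Fin d → Prop)

lemma lamZ_Hhat (z : Fin (d+1) → ℝ) : lamZ (Hhat ltP ltQ z) = lamZ z := by
  simp [lamZ, Hhat, Fin.snoc_last]

lemma muZ_Hhat (z : Fin (d+1) → ℝ) : muZ (Hhat ltP ltQ z) = muZ z := by
  simp [muZ, Hhat, Fin.snoc_last]

lemma initZ_Hhat (z : Fin (d+1) → ℝ) :
    initZ (Hhat ltP ltQ z) = Hmap ltP ltQ (initZ z) := by
  funext i
  simp [initZ, Hhat, Fin.snoc_castSucc]

lemma initZ_Ghat (z : Fin (d+1) → ℝ) :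
    initZ (Ghat ltP ltQ z) = Gmap ltP ltQ (initZ z) := by
  funext i
  simp [initZ, Ghat, Fin.snoc_castSucc]

variable {rk : Fin d → ℕ}
variable (hrk : ∀ i, rk i < d) (hP : ∀ i j, ltP i j → rk i < rk j)
  (hQ : ∀ i j, ltQ i j → rk i < rk j)

include hrk hP hQ

lemma Ghat_Hhat (z : Fin (d+1) → ℝ) : Ghat ltP ltQ (Hhat ltP ltQ z) = z := by
  funext k
  induction k using Fin.lastCases with
  | last => simp [Ghat, Hhat, Fin.snoc_last]
  | cast i =>
    calc Ghat ltP ltQ (Hhat ltP ltQ z) (Fin.castSucc i)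
        = Gmap ltP ltQ (initZ (Hhat ltP ltQ z)) i := by
          simp only [Ghat, Fin.snoc_castSucc]
      _ = z (Fin.castSucc i) := by
          rw [initZ_Hhat, Gmap_Hmap ltP ltQ hrk hP hQ]; rfl

lemma Hhat_Ghat (z : Fin (d+1) → ℝ) : Hhat ltP ltQ (Ghat ltP ltQ z) = z := by
  funext k
  induction k using Fin.lastCases with
  | last => simp [Ghat, Hhat, Fin.snoc_last]
  | cast i =>
    calc Hhat ltP ltQ (Ghat ltP ltQ z) (Fin.castSucc i)
        = Hmap ltP ltQ (initZ (Ghat ltP ltQ z)) i := by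
          simp only [Hhat, Fin.snoc_castSucc]
      _ = z (Fin.castSucc i) := by
          rw [initZ_Ghat, Hmap_Gmap ltP ltQ hrk hP hQ]; rfl

end HhatLemmas

section Transfer

variable {ltP ltQ leP leQ : Fin d → Fin d → Prop} {rk : Fin d → ℕ}

lemma TA (hrk : ∀ i, rk i < d)
    (hP : ∀ i j, ltP i j → rk i < rk j) (hQ : ∀ i j, ltQ i j → rk i < rk j)
    (hleP : ∀ i j, leP i j ↔ ltP i j ∨ i = j) (hleQ : ∀ i j, leQ i j ↔ ltQ i j ∨ i = j) :
    SOset leP leQ = Hhat ltP ltQ ⁻¹' SCset ltP ltQ := by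
  ext z
  simp only [Set.mem_preimage, SOset, SCset, Set.mem_setOf_eq, lamZ_Hhat, muZ_Hhat, initZ_Hhat]
  constructor
  · rintro ⟨h1, h2, u, v, hu, humono, hv, hvmono, hid⟩
    have hINV := INV ltP ltQ hrk hP hQ (fun i => (hu i).1) (fun i => (hv i).1)
      (fun i j hij => humono i j ((hleP i j).mpr (Or.inl hij)))
      (fun i j hij => hvmono i j ((hleQ i j).mpr (Or.inl hij))) hid
    refine ⟨h1, h2, fun i => ?_, fun i => ?_⟩
    · rw [(K1 ltP ltQ hrk hP hQ (initZ z) i).1]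
      exact le_trans (hINV i).1 (hu i).2
    · rw [(K1 ltP ltQ hrk hP hQ (initZ z) i).2]
      exact le_trans (hINV i).2 (hv i).2
  · rintro ⟨h1, h2, hpsiP, hpsiQ⟩
    refine ⟨h1, h2, aF ltP ltQ (initZ z), bF ltP ltQ (initZ z),
      fun i => ?_, fun i j hij => ?_, fun i => ?_, fun i j hij => ?_, fun i => ?_⟩
    · rw [← (K1 ltP ltQ hrk hP hQ (initZ z) i).1]
      exact ⟨psi_nonneg hrk hP (posP_nonneg _) i, hpsiP i⟩
    · rcases (hleP i j).mp hij with h | h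
      · rw [← (K1 ltP ltQ hrk hP hQ (initZ z) i).1, ← (K1 ltP ltQ hrk hP hQ (initZ z) j).1]
        exact psi_le_of_lt hrk hP (posP_nonneg _) h
      · rw [h]
    · rw [← (K1 ltP ltQ hrk hP hQ (initZ z) i).2]
      exact ⟨psi_nonneg hrk hQ (negP_nonneg _) i, hpsiQ i⟩
    · rcases (hleQ i j).mp hij with h | h
      · rw [← (K1 ltP ltQ hrk hP hQ (initZ z) i).2, ← (K1 ltP ltQ hrk hP hQ (initZ z) j).2]
        exact psi_le_of_lt hrk hQ (negP_nonneg _) h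
      · rw [h]
    · exact (aF_sub_bF ltP ltQ hrk hP hQ (initZ z) i).symm

lemma TB (hrk : ∀ i, rk i < d)
    (hP : ∀ i j, ltP i j → rk i < rk j) (hQ : ∀ i j, ltQ i j → rk i < rk j)
    (hleP : ∀ i j, leP i j ↔ ltP i j ∨ i = j) :
    SMset leP ltQ = Hhat ltP (fun _ _ => False) ⁻¹' SCset ltP ltQ := by
  have hQ0 : ∀ i j : Fin d, (fun _ _ : Fin d => False) i j → rk i < rk j := fun _ _ h => h.elim
  ext z
  simp only [Set.mem_preimage, SMset, SCset, Set.mem_setOf_eq, lamZ_Hhat, muZ_Hhat, initZ_Hhat]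
  set y := initZ z with hy
  constructor
  · rintro ⟨h1, h2, u, v, hu, humono, hv0, hpsiv, hid⟩
    have hINV := INV ltP (fun _ _ => False) hrk hP hQ0 (fun i => (hu i).1) hv0
      (fun i j hij => humono i j ((hleP i j).mpr (Or.inl hij)))
      (fun i j hij => hij.elim) hid
    refine ⟨h1, h2, fun i => ?_, fun i => ?_⟩
    · rw [(K1 ltP (fun _ _ => False) hrk hP hQ0 y i).1]
      exact le_trans (hINV i).1 (hu i).2
    · have hneg : ∀ i, negP (Hmap ltP (fun _ _ => False) y) i ≤ v i := by
        intro i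
        have e1 := (K1 ltP (fun _ _ => False) hrk hP hQ0 y i).2
        rw [psi_empty] at e1
        rw [e1]
        exact (hINV i).2
      exact le_trans (psi_mono hneg i) (hpsiv i)
  · rintro ⟨h1, h2, hpsiP, hpsiQ⟩
    refine ⟨h1, h2, aF ltP (fun _ _ => False) y, negP (Hmap ltP (fun _ _ => False) y),
      fun i => ?_, fun i j hij => ?_, fun i => negP_nonneg _ i, fun i => hpsiQ i, fun i => ?_⟩
    · rw [← (K1 ltP (fun _ _ => False) hrk hP hQ0 y i).1]
      exact ⟨psi_nonneg hrk hP (posP_nonneg _) i, hpsiP i⟩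
    · rcases (hleP i j).mp hij with h | h
      · rw [← (K1 ltP (fun _ _ => False) hrk hP hQ0 y i).1,
          ← (K1 ltP (fun _ _ => False) hrk hP hQ0 y j).1]
        exact psi_le_of_lt hrk hP (posP_nonneg _) h
      · rw [h]
    · have e1 := (K1 ltP (fun _ _ => False) hrk hP hQ0 y i).2
      rw [psi_empty] at e1
      rw [e1]
      exact (aF_sub_bF ltP (fun _ _ => False) hrk hP hQ0 y i).symm

end Transfer


/-! ### continuity -/

section Continuity

variable {α : Type*} [TopologicalSpace α]

lemma continuous_mfold (s : Finset (Fin d)) (f : Fin d → α → ℝ)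
    (hf : ∀ j, Continuous (f j)) :
    Continuous (fun y => mfold s (fun j => f j y)) := by
  classical
  induction s using Finset.induction_on with
  | empty =>
    have : (fun y => mfold (∅ : Finset (Fin d)) (fun j => f j y)) = fun _ => 0 := rfl
    rw [this]; exact continuous_const
  | @insert j s hj ih =>
    have : (fun y => mfold (insert j s) (fun j' => f j' y))
        = fun y => max (f j y) (mfold s (fun j' => f j' y)) := by
      funext y
      exact Finset.fold_insert_idem
    rw [this]
    exact (hf j).max ih

lemma continuous_psi (lt : Fin d → Fin d → Prop) (i : Fin d) :
    Continuous (fun c : Fin d → ℝ => psi lt c i) := by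
  have : ∀ n i, Continuous (fun c : Fin d → ℝ => psiA lt c n i) := by
    intro n
    induction n with
    | zero => intro i; exact continuous_apply i
    | succ n ih =>
      intro i
      exact (continuous_apply i).add
        (continuous_mfold _ (fun j => fun c => psiA lt c n j) ih)
  exact this d i

lemma continuous_abA (n : ℕ) (i : Fin d) :
    Continuous (fun y : Fin d → ℝ => (abA ltP ltQ y n i).1) ∧
    Continuous (fun y : Fin d → ℝ => (abA ltP ltQ y n i).2) := by
  induction n generalizing i with
  | zero => exact ⟨continuous_const, continuous_const⟩
  | succ n ih =>
    have hA : Continuous (fun y : Fin d → ℝ =>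
        mfold (ups ltP i) (fun j => (abA ltP ltQ y n j).1)) :=
      continuous_mfold _ _ (fun j => (ih j).1)
    have hB : Continuous (fun y : Fin d → ℝ =>
        mfold (ups ltQ i) (fun j => (abA ltP ltQ y n j).2)) :=
      continuous_mfold _ _ (fun j => (ih j).2)
    constructor
    · exact hA.max ((continuous_apply i).add hB)
    · exact hB.max (hA.sub (continuous_apply i))

lemma continuous_initZ : Continuous (initZ (d := d)) := by
  apply continuous_pi
  intro i
  exact continuous_apply _

lemma continuous_Hmap : Continuous (Hmap ltP ltQ) := by
  apply continuous_pi
  intro i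
  apply Continuous.add
  · apply Continuous.sub (continuous_apply i)
    exact continuous_mfold _ _ (fun j => (continuous_abA ltP ltQ d j).1)
  · exact continuous_mfold _ _ (fun j => (continuous_abA ltP ltQ d j).2)

lemma continuous_Hhat : Continuous (Hhat ltP ltQ) := by
  apply continuous_pi
  intro k
  induction k using Fin.lastCases with
  | last =>
    have : (fun z : Fin (d+1) → ℝ => Hhat ltP ltQ z (Fin.last d))
        = fun z => z (Fin.last d) := by
      funext z; simp [Hhat, Fin.snoc_last]
    rw [this]; exact continuous_apply _
  | cast i =>
    have : (fun z : Fin (d+1) → ℝ => Hhat ltP ltQ z (Fin.castSucc i))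
        = fun z => Hmap ltP ltQ (initZ z) i := by
      funext z; simp [Hhat, Fin.snoc_castSucc]
    rw [this]
    exact ((continuous_apply i).comp (continuous_Hmap ltP ltQ)).comp continuous_initZ

lemma continuous_posP : Continuous (posP (d := d)) := by
  apply continuous_pi
  intro i
  exact (continuous_apply i).max continuous_const

lemma continuous_negP : Continuous (negP (d := d)) := by
  apply continuous_pi
  intro i
  exact (continuous_apply i).neg.max continuous_const

lemma continuous_lamZ : Continuous (lamZ (d := d)) := by
  apply Continuous.div_const
  exact continuous_const.add (continuous_apply _)

lemma continuous_muZ : Continuous (muZ (d := d)) := by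
  apply Continuous.div_const
  exact continuous_const.sub (continuous_apply _)

lemma isClosed_SCset (ltP ltQ : Fin d → Fin d → Prop) : IsClosed (SCset ltP ltQ) := by
  have h1 : IsClosed {z : Fin (d+1) → ℝ | 0 ≤ lamZ z} :=
    isClosed_le continuous_const continuous_lamZ
  have h2 : IsClosed {z : Fin (d+1) → ℝ | 0 ≤ muZ z} :=
    isClosed_le continuous_const continuous_muZ
  have h3 : IsClosed (⋂ i, {z : Fin (d+1) → ℝ | psi ltP (posP (initZ z)) i ≤ lamZ z}) := by
    apply isClosed_iInter
    intro i
    exact isClosed_le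
      (((continuous_psi ltP i).comp continuous_posP).comp continuous_initZ) continuous_lamZ
  have h4 : IsClosed (⋂ i, {z : Fin (d+1) → ℝ | psi ltQ (negP (initZ z)) i ≤ muZ z}) := by
    apply isClosed_iInter
    intro i
    exact isClosed_le
      (((continuous_psi ltQ i).comp continuous_negP).comp continuous_initZ) continuous_muZ
  have : SCset ltP ltQ = {z : Fin (d+1) → ℝ | 0 ≤ lamZ z} ∩ ({z | 0 ≤ muZ z} ∩
      ((⋂ i, {z : Fin (d+1) → ℝ | psi ltP (posP (initZ z)) i ≤ lamZ z}) ∩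
       (⋂ i, {z : Fin (d+1) → ℝ | psi ltQ (negP (initZ z)) i ≤ muZ z}))) := by
    ext z
    simp only [SCset, Set.mem_setOf_eq, Set.mem_inter_iff, Set.mem_iInter]
  rw [this]
  exact h1.inter (h2.inter (h3.inter h4))

end Continuity


/-! ### piecewise linear structure -/

noncomputable def cf : Fin 3 → ℝ := ![0, 1, -1]

lemma cf_zero : cf 0 = 0 := rfl
lemma cf_one : cf 1 = 1 := rfl
lemma cf_two : cf 2 = -1 := rfl

noncomputable def wv (w : Fin d → Fin 3) (y : Fin d → ℝ) : ℝ := ∑ k, cf (w k) * y k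

def zeroW : Fin d → Fin 3 := fun _ => 0

lemma wv_zeroW (y : Fin d → ℝ) : wv zeroW y = 0 := by
  simp [wv, zeroW, cf_zero]

lemma wv_update1 {w : Fin d → Fin 3} {i : Fin d} (hwi : w i = 0) (y : Fin d → ℝ) :
    wv (Function.update w i 1) y = y i + wv w y := by
  have h : (fun k => cf (Function.update w i 1 k) * y k)
      = Function.update (fun k => cf (w k) * y k) i (cf 1 * y i) := by
    funext k
    rcases eq_or_ne k i with rfl | hk
    · simp [Function.update_self]
    · simp [Function.update_of_ne hk]
  unfold wv
  rw [h, Finset.sum_update_of_mem (Finset.mem_univ i)]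
  rw [cf_one]
  have : ∑ k ∈ Finset.univ \ {i}, cf (w k) * y k
      = (∑ k, cf (w k) * y k) - cf (w i) * y i := by
    rw [Finset.sdiff_singleton_eq_erase, Finset.sum_erase_eq_sub (Finset.mem_univ i)]
  rw [this, hwi, cf_zero]
  ring

lemma wv_update2 {w : Fin d → Fin 3} {i : Fin d} (hwi : w i = 0) (y : Fin d → ℝ) :
    wv (Function.update w i 2) y = wv w y - y i := by
  have h : (fun k => cf (Function.update w i 2 k) * y k)
      = Function.update (fun k => cf (w k) * y k) i (cf 2 * y i) := by
    funext k
    rcases eq_or_ne k i with rfl | hk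
    · simp [Function.update_self]
    · simp [Function.update_of_ne hk]
  unfold wv
  rw [h, Finset.sum_update_of_mem (Finset.mem_univ i)]
  rw [cf_two]
  have : ∑ k ∈ Finset.univ \ {i}, cf (w k) * y k
      = (∑ k, cf (w k) * y k) - cf (w i) * y i := by
    rw [Finset.sdiff_singleton_eq_erase, Finset.sum_erase_eq_sub (Finset.mem_univ i)]
  rw [this, hwi, cf_zero]
  ring

section Fam

variable (ltP ltQ : Fin d → Fin d → Prop)

noncomputable def fam : ℕ → Fin d → Finset (Fin d → Fin 3) × Finset (Fin d → Fin 3)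
  | 0 => fun _ => ({zeroW}, {zeroW})
  | n+1 => fun i =>
      (insert zeroW ((ups ltP i).biUnion (fun j => (fam n j).1)) ∪
        (insert zeroW ((ups ltQ i).biUnion (fun j => (fam n j).2))).image
          (fun w => Function.update w i 1),
       insert zeroW ((ups ltQ i).biUnion (fun j => (fam n j).2)) ∪
        (insert zeroW ((ups ltP i).biUnion (fun j => (fam n j).1))).image
          (fun w => Function.update w i 2))

noncomputable def famA (n : ℕ) (i : Fin d) : Finset (Fin d → Fin 3) :=
  insert zeroW ((ups ltP i).biUnion (fun j => (fam ltP ltQ n j).1))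

noncomputable def famB (n : ℕ) (i : Fin d) : Finset (Fin d → Fin 3) :=
  insert zeroW ((ups ltQ i).biUnion (fun j => (fam ltP ltQ n j).2))

lemma fam_succ (n : ℕ) (i : Fin d) : fam ltP ltQ (n+1) i =
    (famA ltP ltQ n i ∪ (famB ltP ltQ n i).image (fun w => Function.update w i 1),
     famB ltP ltQ n i ∪ (famA ltP ltQ n i).image (fun w => Function.update w i 2)) := rfl

lemma zeroW_mem_fam (n : ℕ) (i : Fin d) :
    zeroW ∈ (fam ltP ltQ n i).1 ∧ zeroW ∈ (fam ltP ltQ n i).2 := by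
  cases n with
  | zero => exact ⟨Finset.mem_singleton_self _, Finset.mem_singleton_self _⟩
  | succ n =>
    rw [fam_succ]
    exact ⟨Finset.mem_union_left _ (Finset.mem_insert_self _ _),
      Finset.mem_union_left _ (Finset.mem_insert_self _ _)⟩

lemma fam1_ne (n : ℕ) (i : Fin d) : (fam ltP ltQ n i).1.Nonempty :=
  ⟨zeroW, (zeroW_mem_fam ltP ltQ n i).1⟩

lemma fam2_ne (n : ℕ) (i : Fin d) : (fam ltP ltQ n i).2.Nonempty :=
  ⟨zeroW, (zeroW_mem_fam ltP ltQ n i).2⟩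

lemma famA_ne (n : ℕ) (i : Fin d) : (famA ltP ltQ n i).Nonempty :=
  Finset.insert_nonempty _ _

lemma famB_ne (n : ℕ) (i : Fin d) : (famB ltP ltQ n i).Nonempty :=
  Finset.insert_nonempty _ _

variable {rk : Fin d → ℕ}
variable (hP : ∀ i j, ltP i j → rk i < rk j) (hQ : ∀ i j, ltQ i j → rk i < rk j)

include hP hQ

lemma fam_supp : ∀ n (i : Fin d),
    (∀ w ∈ (fam ltP ltQ n i).1, ∀ k, w k ≠ 0 → rk i ≤ rk k) ∧
    (∀ w ∈ (fam ltP ltQ n i).2, ∀ k, w k ≠ 0 → rk i ≤ rk k) := by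
  intro n
  induction n with
  | zero =>
    intro i
    constructor <;>
      · intro w hw k hk
        rw [show (fam ltP ltQ 0 i) = ({zeroW}, {zeroW}) from rfl] at hw
        rw [Finset.mem_singleton] at hw
        subst hw
        exact absurd rfl hk
  | succ n ih =>
    intro i
    have hA : ∀ w ∈ famA ltP ltQ n i, ∀ k, w k ≠ 0 → rk i < rk k := by
      intro w hw k hk
      rcases Finset.mem_insert.mp hw with rfl | hw
      · exact absurd rfl hk
      · obtain ⟨j, hj, hwj⟩ := Finset.mem_biUnion.mp hw
        have h1 := (ih j).1 w hwj k hk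
        have h2 := hP i j (mem_ups.mp hj)
        omega
    have hB : ∀ w ∈ famB ltP ltQ n i, ∀ k, w k ≠ 0 → rk i < rk k := by
      intro w hw k hk
      rcases Finset.mem_insert.mp hw with rfl | hw
      · exact absurd rfl hk
      · obtain ⟨j, hj, hwj⟩ := Finset.mem_biUnion.mp hw
        have h1 := (ih j).2 w hwj k hk
        have h2 := hQ i j (mem_ups.mp hj)
        omega
    rw [fam_succ]
    constructor
    · intro w hw k hk
      rcases Finset.mem_union.mp hw with hw | hw
      · exact (hA w hw k hk).le
      · obtain ⟨w', hw', rfl⟩ := Finset.mem_image.mp hw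
        rcases eq_or_ne k i with rfl | hki
        · exact le_rfl
        · rw [Function.update_of_ne hki] at hk
          exact (hB w' hw' k hk).le
    · intro w hw k hk
      rcases Finset.mem_union.mp hw with hw | hw
      · exact (hB w hw k hk).le
      · obtain ⟨w', hw', rfl⟩ := Finset.mem_image.mp hw
        rcases eq_or_ne k i with rfl | hki
        · exact le_rfl
        · rw [Function.update_of_ne hki] at hk
          exact (hA w' hw' k hk).le

lemma famA_supp (n : ℕ) (i : Fin d) :
    ∀ w ∈ famA ltP ltQ n i, ∀ k, w k ≠ 0 → rk i < rk k := by
  intro w hw k hk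
  rcases Finset.mem_insert.mp hw with rfl | hw
  · exact absurd rfl hk
  · obtain ⟨j, hj, hwj⟩ := Finset.mem_biUnion.mp hw
    have h1 := (fam_supp ltP ltQ hP hQ n j).1 w hwj k hk
    have h2 := hP i j (mem_ups.mp hj)
    omega

lemma famB_supp (n : ℕ) (i : Fin d) :
    ∀ w ∈ famB ltP ltQ n i, ∀ k, w k ≠ 0 → rk i < rk k := by
  intro w hw k hk
  rcases Finset.mem_insert.mp hw with rfl | hw
  · exact absurd rfl hk
  · obtain ⟨j, hj, hwj⟩ := Finset.mem_biUnion.mp hw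
    have h1 := (fam_supp ltP ltQ hP hQ n j).2 w hwj k hk
    have h2 := hQ i j (mem_ups.mp hj)
    omega

lemma famA_zero_at (n : ℕ) (i : Fin d) {w : Fin d → Fin 3} (hw : w ∈ famA ltP ltQ n i) :
    w i = 0 := by
  by_contra h
  exact absurd (famA_supp ltP ltQ hP hQ n i w hw i h) (lt_irrefl _)

lemma famB_zero_at (n : ℕ) (i : Fin d) {w : Fin d → Fin 3} (hw : w ∈ famB ltP ltQ n i) :
    w i = 0 := by
  by_contra h
  exact absurd (famB_supp ltP ltQ hP hQ n i w hw i h) (lt_irrefl _)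

end Fam

/-! ### sup' bridges -/

lemma sup'_add_const (F : Finset (Fin d → Fin 3)) (hF : F.Nonempty)
    (g : (Fin d → Fin 3) → ℝ) (c : ℝ) :
    F.sup' hF (fun w => c + g w) = c + F.sup' hF g := by
  apply le_antisymm
  · exact Finset.sup'_le _ _ (fun w hw => (add_le_add_iff_left c).mpr (Finset.le_sup' g hw))
  · obtain ⟨w, hw, he⟩ := Finset.exists_mem_eq_sup' hF g
    rw [he]
    exact Finset.le_sup' (fun w => c + g w) hw

lemma mfold_sup' {s : Finset (Fin d)} {F : Fin d → Finset (Fin d → Fin 3)}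
    (hF : ∀ j, zeroW ∈ F j) {g : (Fin d → Fin 3) → ℝ} (hg : g zeroW = 0)
    {f : Fin d → ℝ} (hf : ∀ j ∈ s, f j = (F j).sup' ⟨zeroW, hF j⟩ g) :
    mfold s f = (insert zeroW (s.biUnion F)).sup' (Finset.insert_nonempty _ _) g := by
  classical
  induction s using Finset.induction_on with
  | empty =>
    have h1 : mfold (∅ : Finset (Fin d)) f = 0 := rfl
    have h2 : (∅ : Finset (Fin d)).biUnion F = ∅ := rfl
    rw [h1, h2]
    simp [hg]
  | @insert j s hj ih =>
    have h1 : mfold (insert j s) f = max (f j) (mfold s f) := Finset.fold_insert_idem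
    rw [h1, hf j (Finset.mem_insert_self _ _),
      ih (fun j' hj' => hf j' (Finset.mem_insert_of_mem hj'))]
    rw [← Finset.sup'_union (⟨zeroW, hF j⟩ : (F j).Nonempty) (Finset.insert_nonempty _ _) g]
    apply Finset.sup'_congr
    · rw [Finset.biUnion_insert]
      ext w
      simp only [Finset.mem_union, Finset.mem_insert]
      tauto
    · intro w _
      rfl


section FamRepr

variable (ltP ltQ : Fin d → Fin d → Prop) {rk : Fin d → ℕ}
variable (hP : ∀ i j, ltP i j → rk i < rk j) (hQ : ∀ i j, ltQ i j → rk i < rk j)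

include hP hQ

lemma fam_repr : ∀ n (i : Fin d) (y : Fin d → ℝ),
    (abA ltP ltQ y n i).1 = ((fam ltP ltQ n i).1).sup' (fam1_ne ltP ltQ n i) (fun w => wv w y) ∧
    (abA ltP ltQ y n i).2 = ((fam ltP ltQ n i).2).sup' (fam2_ne ltP ltQ n i) (fun w => wv w y) := by
  intro n
  induction n with
  | zero =>
    intro i y
    constructor
    · show (0:ℝ) = Finset.sup' {zeroW} _ _
      rw [Finset.sup'_singleton, wv_zeroW]
    · show (0:ℝ) = Finset.sup' {zeroW} _ _
      rw [Finset.sup'_singleton, wv_zeroW]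
  | succ n ih =>
    intro i y
    have hAf : mfold (ups ltP i) (fun j => (abA ltP ltQ y n j).1)
        = (famA ltP ltQ n i).sup' (famA_ne ltP ltQ n i) (fun w => wv w y) := by
      exact mfold_sup' (fun j => (zeroW_mem_fam ltP ltQ n j).1) (wv_zeroW y)
        (fun j _ => (ih j y).1)
    have hBf : mfold (ups ltQ i) (fun j => (abA ltP ltQ y n j).2)
        = (famB ltP ltQ n i).sup' (famB_ne ltP ltQ n i) (fun w => wv w y) := by
      exact mfold_sup' (fun j => (zeroW_mem_fam ltP ltQ n j).2) (wv_zeroW y)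
        (fun j _ => (ih j y).2)
    have hImB : ((famB ltP ltQ n i).image (fun w => Function.update w i 1)).sup'
        ((famB_ne ltP ltQ n i).image _) (fun w => wv w y)
        = y i + (famB ltP ltQ n i).sup' (famB_ne ltP ltQ n i) (fun w => wv w y) := by
      rw [Finset.sup'_image]
      rw [← sup'_add_const]
      apply Finset.sup'_congr _ rfl
      intro w hw
      show wv (Function.update w i 1) y = y i + wv w y
      exact wv_update1 (famB_zero_at ltP ltQ hP hQ n i hw) y
    have hImA : ((famA ltP ltQ n i).image (fun w => Function.update w i 2)).sup'
        ((famA_ne ltP ltQ n i).image _) (fun w => wv w y)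
        = (famA ltP ltQ n i).sup' (famA_ne ltP ltQ n i) (fun w => wv w y) - y i := by
      rw [Finset.sup'_image]
      have : (famA ltP ltQ n i).sup' (famA_ne ltP ltQ n i)
          (fun w => (-(y i)) + wv w y)
          = -(y i) + (famA ltP ltQ n i).sup' (famA_ne ltP ltQ n i) (fun w => wv w y) :=
        sup'_add_const _ _ _ _
      rw [show ((fun w => wv w y) ∘ (fun w => Function.update w i 2))
          = fun w => wv (Function.update w i 2) y from rfl]
      calc (famA ltP ltQ n i).sup' _ (fun w => wv (Function.update w i 2) y)
          = (famA ltP ltQ n i).sup' (famA_ne ltP ltQ n i) (fun w => (-(y i)) + wv w y) := by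
            apply Finset.sup'_congr _ rfl
            intro w hw
            rw [wv_update2 (famA_zero_at ltP ltQ hP hQ n i hw) y]
            ring
        _ = -(y i) + (famA ltP ltQ n i).sup' (famA_ne ltP ltQ n i) (fun w => wv w y) := this
        _ = _ := by ring
    constructor
    · show max (mfold (ups ltP i) (fun j => (abA ltP ltQ y n j).1))
          (y i + mfold (ups ltQ i) (fun j => (abA ltP ltQ y n j).2)) = _
      rw [hAf, hBf, ← hImB]
      exact (Finset.sup'_union (famA_ne ltP ltQ n i) ((famB_ne ltP ltQ n i).image _)
        (fun w => wv w y)).symm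
    · show max (mfold (ups ltQ i) (fun j => (abA ltP ltQ y n j).2))
          (mfold (ups ltP i) (fun j => (abA ltP ltQ y n j).1) - y i) = _
      rw [hAf, hBf, ← hImA]
      exact (Finset.sup'_union (famB_ne ltP ltQ n i) ((famA_ne ltP ltQ n i).image _)
        (fun w => wv w y)).symm

lemma Af_repr (y : Fin d → ℝ) (i : Fin d) :
    Af ltP ltQ y i = (famA ltP ltQ d i).sup' (famA_ne ltP ltQ d i) (fun w => wv w y) := by
  exact mfold_sup' (fun j => (zeroW_mem_fam ltP ltQ d j).1) (wv_zeroW y)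
    (fun j _ => (fam_repr ltP ltQ hP hQ d j y).1)

lemma Bf_repr (y : Fin d → ℝ) (i : Fin d) :
    Bf ltP ltQ y i = (famB ltP ltQ d i).sup' (famB_ne ltP ltQ d i) (fun w => wv w y) := by
  exact mfold_sup' (fun j => (zeroW_mem_fam ltP ltQ d j).2) (wv_zeroW y)
    (fun j _ => (fam_repr ltP ltQ hP hQ d j y).2)

end FamRepr

/-! ### selection -/

noncomputable instance : LinearOrder (Fin d → Fin 3) :=
  LinearOrder.lift' (fun w => Fintype.equivFin (Fin d → Fin 3) w)
    (fun a b h => (Fintype.equivFin (Fin d → Fin 3)).injective h)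

noncomputable def sigW (y : Fin d → ℝ) : ((Fin d → Fin 3) × (Fin d → Fin 3)) → Bool :=
  fun p => decide (wv p.1 y ≤ wv p.2 y)

noncomputable def sel (F : Finset (Fin d → Fin 3)) (hF : F.Nonempty)
    (s : ((Fin d → Fin 3) × (Fin d → Fin 3)) → Bool) : Fin d → Fin 3 :=
  if h : (F.filter (fun w => ∀ w' ∈ F, s (w', w) = true)).Nonempty
  then (F.filter (fun w => ∀ w' ∈ F, s (w', w) = true)).min' h
  else F.min' hF

lemma sel_mem (F : Finset (Fin d → Fin 3)) (hF : F.Nonempty)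
    (s : ((Fin d → Fin 3) × (Fin d → Fin 3)) → Bool) : sel F hF s ∈ F := by
  unfold sel
  split
  · exact Finset.mem_of_mem_filter _ (Finset.min'_mem _ _)
  · exact Finset.min'_mem _ _

lemma sel_spec (F : Finset (Fin d → Fin 3)) (hF : F.Nonempty) (y : Fin d → ℝ) :
    wv (sel F hF (sigW y)) y = F.sup' hF (fun w => wv w y) := by
  obtain ⟨w0, hw0, hmax⟩ := Finset.exists_max_image F (fun w => wv w y) hF
  have hne : (F.filter (fun w => ∀ w' ∈ F, sigW y (w', w) = true)).Nonempty :=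
    ⟨w0, Finset.mem_filter.mpr ⟨hw0, fun w' hw' => decide_eq_true (hmax w' hw')⟩⟩
  unfold sel
  rw [dif_pos hne]
  have hmm := Finset.min'_mem _ hne
  obtain ⟨h1, h2⟩ := Finset.mem_filter.mp hmm
  apply le_antisymm
  · exact Finset.le_sup' (fun w => wv w y) h1
  · apply Finset.sup'_le
    intro w hw
    exact of_decide_eq_true (h2 w hw)

/-! ### the matrices -/

section Mtx

variable (ltP ltQ : Fin d → Fin d → Prop)

noncomputable def selA (s : ((Fin d → Fin 3) × (Fin d → Fin 3)) → Bool) (i : Fin d) :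
    Fin d → Fin 3 :=
  sel (famA ltP ltQ d i) (famA_ne ltP ltQ d i) s

noncomputable def selB (s : ((Fin d → Fin 3) × (Fin d → Fin 3)) → Bool) (i : Fin d) :
    Fin d → Fin 3 :=
  sel (famB ltP ltQ d i) (famB_ne ltP ltQ d i) s

noncomputable def coefH (s : ((Fin d → Fin 3) × (Fin d → Fin 3)) → Bool) (i k : Fin d) : ℝ :=
  (if k = i then 1 else 0) - cf (selA ltP ltQ s i k) + cf (selB ltP ltQ s i k)

noncomputable def Mtx (s : ((Fin d → Fin 3) × (Fin d → Fin 3)) → Bool) :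
    Matrix (Fin (d+1)) (Fin (d+1)) ℝ := fun r c =>
  if hr : (r : ℕ) < d then
    (if hc : (c : ℕ) < d then coefH ltP ltQ s ⟨r, hr⟩ ⟨c, hc⟩ else 0)
  else (if (c : ℕ) < d then 0 else 1)

variable {rk : Fin d → ℕ}
variable (hrk : ∀ i, rk i < d)
variable (hP : ∀ i j, ltP i j → rk i < rk j) (hQ : ∀ i j, ltQ i j → rk i < rk j)

include hP hQ

lemma Mtx_mulVec (z : Fin (d+1) → ℝ) :
    (Mtx ltP ltQ (sigW (initZ z))).mulVec z = Hhat ltP ltQ z := by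
  funext r
  have hsum : (Mtx ltP ltQ (sigW (initZ z))).mulVec z r
      = ∑ c, Mtx ltP ltQ (sigW (initZ z)) r c * z c := rfl
  by_cases hr : (r : ℕ) < d
  · obtain ⟨i, rfl⟩ : ∃ i : Fin d, r = Fin.castSucc i := ⟨⟨r, hr⟩, Fin.ext rfl⟩
    set s := sigW (initZ z) with hs
    have hentry1 : ∀ j : Fin d, Mtx ltP ltQ s (Fin.castSucc i) (Fin.castSucc j)
        = coefH ltP ltQ s i j := by
      intro j
      have hj : ((Fin.castSucc j : Fin (d+1)) : ℕ) < d := j.isLt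
      show dite _ _ _ = _
      rw [dif_pos hr, dif_pos hj]
      exact congrArg₂ (coefH ltP ltQ s) (Fin.ext rfl) (Fin.ext rfl)
    have hentry2 : Mtx ltP ltQ s (Fin.castSucc i) (Fin.last d) = 0 := by
      show dite _ _ _ = _
      rw [dif_pos hr]
      exact dif_neg (by simp)
    rw [hsum, Fin.sum_univ_castSucc, hentry2, zero_mul, add_zero]
    have hterm : ∀ j : Fin d, Mtx ltP ltQ s (Fin.castSucc i) (Fin.castSucc j) * z (Fin.castSucc j)
        = ((if j = i then 1 else 0) * z (Fin.castSucc j)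
          - cf (selA ltP ltQ s i j) * z (Fin.castSucc j))
          + cf (selB ltP ltQ s i j) * z (Fin.castSucc j) := by
      intro j
      rw [hentry1 j]
      show coefH _ _ _ i j * z (Fin.castSucc j) = _
      unfold coefH
      ring
    rw [Finset.sum_congr rfl (fun j _ => hterm j)]
    rw [Finset.sum_add_distrib, Finset.sum_sub_distrib]
    have e1 : ∑ j, (if j = i then (1:ℝ) else 0) * z (Fin.castSucc j) = z (Fin.castSucc i) := by
      simp
    have e2 : ∑ j, cf (selA ltP ltQ s i j) * z (Fin.castSucc j)
        = Af ltP ltQ (initZ z) i := by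
      rw [Af_repr ltP ltQ hP hQ, ← sel_spec (famA ltP ltQ d i) (famA_ne ltP ltQ d i) (initZ z)]
      rfl
    have e3 : ∑ j, cf (selB ltP ltQ s i j) * z (Fin.castSucc j)
        = Bf ltP ltQ (initZ z) i := by
      rw [Bf_repr ltP ltQ hP hQ, ← sel_spec (famB ltP ltQ d i) (famB_ne ltP ltQ d i) (initZ z)]
      rfl
    rw [e1, e2, e3]
    have hfin : Hhat ltP ltQ z (Fin.castSucc i) = Hmap ltP ltQ (initZ z) i := by
      show Fin.snoc _ _ (Fin.castSucc i) = _
      exact Fin.snoc_castSucc _ _ _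
    rw [hfin]
    rfl
  · have hlast : r = Fin.last d := Fin.ext (by have := r.isLt; simp [Fin.last]; omega)
    subst hlast
    have hentry1 : ∀ j : Fin d, Mtx ltP ltQ (sigW (initZ z)) (Fin.last d) (Fin.castSucc j) = 0 := by
      intro j
      show dite _ _ _ = _
      rw [dif_neg hr]
      exact if_pos (j.isLt)
    have hentry2 : Mtx ltP ltQ (sigW (initZ z)) (Fin.last d) (Fin.last d) = 1 := by
      show dite _ _ _ = _
      rw [dif_neg hr]
      exact if_neg (by simp)
    rw [hsum, Fin.sum_univ_castSucc, hentry2, one_mul]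
    rw [Finset.sum_congr rfl (fun j _ => by rw [hentry1 j, zero_mul])]
    rw [Finset.sum_const_zero, zero_add]
    have hfin : Hhat ltP ltQ z (Fin.last d) = z (Fin.last d) := by
      show Fin.snoc _ _ (Fin.last d) = _
      exact Fin.snoc_last _ _
    rw [hfin]

end Mtx

/-! ### determinant -/

lemma det_triangular {D : ℕ} (M : Matrix (Fin D) (Fin D) ℝ) (R : Fin D → ℕ)
    (hinj : Function.Injective R)
    (h : ∀ r c, M r c ≠ 0 → r = c ∨ R r < R c) (hd : ∀ r, M r r = 1) : M.det = 1 := by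
  have hinj2 : Function.Injective (R ∘ (Tuple.sort R)) :=
    hinj.comp (Tuple.sort R).injective
  have hsm : StrictMono (R ∘ (Tuple.sort R)) :=
    (Tuple.monotone_sort R).strictMono_of_injective hinj2
  rw [← Matrix.det_submatrix_equiv_self (Tuple.sort R) M]
  rw [Matrix.det_of_upperTriangular]
  · apply Finset.prod_eq_one
    intro i _
    exact hd _
  · intro a b hab
    by_contra hne
    rcases h _ _ hne with heq | hlt
    · have : a = b := (Tuple.sort R).injective heq
      subst this
      exact absurd hab (lt_irrefl _)
    · have : R (Tuple.sort R b) < R (Tuple.sort R a) := hsm hab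
      show False
      have h2 : R (Tuple.sort R a) < R (Tuple.sort R b) := hlt
      omega

lemma det_Mtx (ltP ltQ : Fin d → Fin d → Prop) {rk : Fin d → ℕ}
    (hrk : ∀ i, rk i < d) (hinj : Function.Injective rk)
    (hP : ∀ i j, ltP i j → rk i < rk j) (hQ : ∀ i j, ltQ i j → rk i < rk j)
    (s : ((Fin d → Fin 3) × (Fin d → Fin 3)) → Bool) :
    (Mtx ltP ltQ s).det = 1 := by
  set R : Fin (d+1) → ℕ := fun r => if h : (r : ℕ) < d then rk ⟨r, h⟩ else d with hR
  apply det_triangular _ R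
  · intro a b hab
    by_cases ha : (a : ℕ) < d <;> by_cases hb : (b : ℕ) < d
    · simp only [hR, dif_pos ha, dif_pos hb] at hab
      have : (⟨a, ha⟩ : Fin d) = ⟨b, hb⟩ := hinj hab
      have := congrArg Fin.val this
      exact Fin.ext this
    · simp only [hR, dif_pos ha, dif_neg hb] at hab
      exfalso
      have h3 := hrk (⟨a, ha⟩ : Fin d)
      rw [hab] at h3
      exact lt_irrefl _ h3
    · simp only [hR, dif_neg ha, dif_pos hb] at hab
      exfalso
      have h3 := hrk (⟨b, hb⟩ : Fin d)
      rw [← hab] at h3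
      exact lt_irrefl _ h3
    · have h1 : (a : ℕ) = d := by have := a.isLt; omega
      have h2 : (b : ℕ) = d := by have := b.isLt; omega
      exact Fin.ext (h1.trans h2.symm)
  · intro r c hne
    by_cases hr : (r : ℕ) < d
    · by_cases hc : (c : ℕ) < d
      · set i : Fin d := ⟨r, hr⟩
        set k : Fin d := ⟨c, hc⟩
        have hent : Mtx ltP ltQ s r c = coefH ltP ltQ s i k := by
          show dite _ _ _ = _
          rw [dif_pos hr, dif_pos hc]
        rw [hent] at hne
        by_cases hik : k = i
        · left
          exact Fin.ext (congrArg Fin.val hik).symm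
        · right
          by_cases hrkik : rk i < rk k
          · simp only [hR, dif_pos hr, dif_pos hc]
            exact hrkik
          · exfalso
            apply hne
            unfold coefH
            rw [if_neg hik]
            have hA : (selA ltP ltQ s i) k = 0 := by
              by_contra hA
              exact hrkik (famA_supp ltP ltQ hP hQ d i _ (sel_mem _ _ _) k hA)
            have hB : (selB ltP ltQ s i) k = 0 := by
              by_contra hB
              exact hrkik (famB_supp ltP ltQ hP hQ d i _ (sel_mem _ _ _) k hB)
            rw [hA, hB, cf_zero]
            ring
      · exfalso
        apply hne
        show dite _ _ _ = (0:ℝ)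
        rw [dif_pos hr, dif_neg hc]
    · by_cases hc : (c : ℕ) < d
      · exfalso
        apply hne
        show dite _ _ _ = (0:ℝ)
        rw [dif_neg hr, if_pos hc]
      · left
        have h1 : (r : ℕ) = d := by have := r.isLt; omega
        have h2 : (c : ℕ) = d := by have := c.isLt; omega
        exact Fin.ext (h1.trans h2.symm)
  · intro r
    by_cases hr : (r : ℕ) < d
    · have hent : Mtx ltP ltQ s r r = coefH ltP ltQ s ⟨r, hr⟩ ⟨r, hr⟩ := by
        show dite _ _ _ = _
        rw [dif_pos hr, dif_pos hr]
      rw [hent]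
      unfold coefH
      rw [if_pos rfl]
      have hA : (selA ltP ltQ s ⟨r, hr⟩) ⟨r, hr⟩ = 0 :=
        famA_zero_at ltP ltQ hP hQ d _ (sel_mem _ _ _)
      have hB : (selB ltP ltQ s ⟨r, hr⟩) ⟨r, hr⟩ = 0 :=
        famB_zero_at ltP ltQ hP hQ d _ (sel_mem _ _ _)
      rw [hA, hB, cf_zero]
      ring
    · show dite _ _ _ = (1:ℝ)
      rw [dif_neg hr, if_neg hr]


/-! ### measure preservation -/

section Measure

variable (ltP ltQ : Fin d → Fin d → Prop) {rk : Fin d → ℕ}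

def Efib (s : ((Fin d → Fin 3) × (Fin d → Fin 3)) → Bool) : Set (Fin (d+1) → ℝ) :=
  {z | sigW (initZ z) = s}

lemma continuous_wv_initZ (w : Fin d → Fin 3) :
    Continuous (fun z : Fin (d+1) → ℝ => wv w (initZ z)) := by
  unfold wv
  apply continuous_finset_sum
  intro k _
  show Continuous fun z : Fin (d+1) → ℝ => cf (w k) * z (Fin.castSucc k)
  exact continuous_const.mul (continuous_apply _)

lemma measurableSet_Efib (s : ((Fin d → Fin 3) × (Fin d → Fin 3)) → Bool) :
    MeasurableSet (Efib (d := d) s) := by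
  have he : Efib (d := d) s = ⋂ p : (Fin d → Fin 3) × (Fin d → Fin 3),
      {z : Fin (d+1) → ℝ | sigW (initZ z) p = s p} := by
    ext z
    simp only [Efib, Set.mem_setOf_eq, Set.mem_iInter, funext_iff]
  rw [he]
  apply MeasurableSet.iInter
  intro p
  by_cases hs : s p
  · have : {z : Fin (d+1) → ℝ | sigW (initZ z) p = s p}
        = {z | wv p.1 (initZ z) ≤ wv p.2 (initZ z)} := by
      ext z
      simp [sigW, hs]
    rw [this]
    exact (isClosed_le (continuous_wv_initZ p.1) (continuous_wv_initZ p.2)).measurableSet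
  · have hs' : s p = false := by simpa using hs
    have : {z : Fin (d+1) → ℝ | sigW (initZ z) p = s p}
        = {z | wv p.2 (initZ z) < wv p.1 (initZ z)} := by
      ext z
      simp [sigW, hs', not_le]
    rw [this]
    exact measurableSet_lt (continuous_wv_initZ p.2).measurable (continuous_wv_initZ p.1).measurable

variable (hrk : ∀ i, rk i < d) (hinj : Function.Injective rk)
variable (hP : ∀ i j, ltP i j → rk i < rk j) (hQ : ∀ i j, ltQ i j → rk i < rk j)

include hrk hinj hP hQ

theorem measurePreserving_Hhat :
    MeasurePreserving (Hhat ltP ltQ) (volume : Measure (Fin (d+1) → ℝ)) volume := by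
  have hmeas : Measurable (Hhat ltP ltQ) := (continuous_Hhat ltP ltQ).measurable
  refine ⟨hmeas, ?_⟩
  apply Measure.ext
  intro T hT
  rw [Measure.map_apply hmeas hT]
  set B := Hhat ltP ltQ ⁻¹' T with hB
  have hBmeas : MeasurableSet B := hmeas hT
  set L : (((Fin d → Fin 3) × (Fin d → Fin 3)) → Bool) →
      ((Fin (d+1) → ℝ) →ₗ[ℝ] (Fin (d+1) → ℝ)) :=
    fun s => Matrix.toLin' (Mtx ltP ltQ s) with hL
  have hdet : ∀ s, LinearMap.det (L s) = 1 := by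
    intro s
    rw [hL]
    show LinearMap.det (Matrix.toLin' (Mtx ltP ltQ s)) = 1
    rw [LinearMap.det_toLin']
    exact det_Mtx ltP ltQ hrk hinj hP hQ s
  have hHL : ∀ s, ∀ z ∈ Efib (d := d) s, Hhat ltP ltQ z = L s z := by
    intro s z hz
    have hz' : sigW (initZ z) = s := hz
    rw [← hz']
    show Hhat ltP ltQ z = Matrix.toLin' (Mtx ltP ltQ (sigW (initZ z))) z
    rw [Matrix.toLin'_apply]
    exact (Mtx_mulVec ltP ltQ hP hQ z).symm
  have hinjH : Function.Injective (Hhat ltP ltQ) := by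
    intro z1 z2 h
    have := congrArg (Ghat ltP ltQ) h
    rwa [Ghat_Hhat ltP ltQ hrk hP hQ, Ghat_Hhat ltP ltQ hrk hP hQ] at this
  have hsurjH : Function.Surjective (Hhat ltP ltQ) :=
    fun t => ⟨Ghat ltP ltQ t, Hhat_Ghat ltP ltQ hrk hP hQ t⟩
  have himg : ∀ s, Hhat ltP ltQ '' (B ∩ Efib (d := d) s) = L s '' (B ∩ Efib (d := d) s) := by
    intro s
    apply Set.image_congr
    intro z hz
    exact hHL s z hz.2
  have hmeasimg : ∀ s, MeasurableSet (Hhat ltP ltQ '' (B ∩ Efib (d := d) s)) := by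
    intro s
    rw [himg s]
    have hdets : LinearMap.det (L s) ≠ 0 := by rw [hdet s]; norm_num
    set e := LinearMap.equivOfDetNeZero (L s) hdets with he
    have hex : ∀ x, e x = L s x := fun x => rfl
    have himg2 : ⇑(L s) '' (B ∩ Efib (d := d) s)
        = (fun t => e.symm t) ⁻¹' (B ∩ Efib (d := d) s) := by
      ext t
      constructor
      · rintro ⟨x, hx, rfl⟩
        have hsx : e.symm ((L s) x) = x := by rw [← hex x, e.symm_apply_apply]
        show e.symm ((L s) x) ∈ B ∩ Efib (d := d) s
        rw [hsx]
        exact hx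
      · intro ht
        refine ⟨e.symm t, ht, ?_⟩
        rw [← hex (e.symm t), e.apply_symm_apply]
    rw [himg2]
    have hcont : Continuous (fun t => e.symm t) :=
      LinearMap.continuous_of_finiteDimensional e.symm.toLinearMap
    exact hcont.measurable (hBmeas.inter (measurableSet_Efib s))
  have hcover : T = ⋃ s, Hhat ltP ltQ '' (B ∩ Efib (d := d) s) := by
    ext t
    constructor
    · intro ht
      obtain ⟨z, hz⟩ := hsurjH t
      apply Set.mem_iUnion.mpr
      refine ⟨sigW (initZ z), ⟨z, ⟨?_, rfl⟩, hz⟩⟩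
      show Hhat ltP ltQ z ∈ T
      rw [hz]
      exact ht
    · intro ht
      obtain ⟨s, hs⟩ := Set.mem_iUnion.mp ht
      obtain ⟨z, hz, rfl⟩ := hs
      exact hz.1
  have hdisj : Pairwise (Function.onFun Disjoint
      (fun s => Hhat ltP ltQ '' (B ∩ Efib (d := d) s))) := by
    intro s1 s2 hne
    apply Set.disjoint_left.mpr
    rintro t ⟨z1, hz1, rfl⟩ ⟨z2, hz2, he⟩
    have hz12 : z2 = z1 := hinjH he
    subst hz12
    exact hne (hz1.2.symm.trans hz2.2)
  have hdisj2 : Pairwise (Function.onFun Disjoint (fun s => B ∩ Efib (d := d) s)) := by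
    intro s1 s2 hne
    apply Set.disjoint_left.mpr
    rintro z ⟨_, hz1⟩ ⟨_, hz2⟩
    exact hne (hz1.symm.trans hz2)
  have hcalc : volume T = volume B := by
    calc volume T = volume (⋃ s, Hhat ltP ltQ '' (B ∩ Efib (d := d) s)) := by rw [← hcover]
      _ = ∑' s, volume (Hhat ltP ltQ '' (B ∩ Efib (d := d) s)) :=
          measure_iUnion hdisj hmeasimg
      _ = ∑' s, volume (B ∩ Efib (d := d) s) := by
          apply tsum_congr
          intro s
          rw [himg s, Measure.addHaar_image_linearMap volume (L s), hdet s]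
          simp
      _ = volume (⋃ s, B ∩ Efib (d := d) s) :=
          (measure_iUnion hdisj2 (fun s => hBmeas.inter (measurableSet_Efib s))).symm
      _ = volume B := by
          rw [← Set.inter_iUnion]
          have : (⋃ s, Efib (d := d) s) = Set.univ := by
            ext z
            simp only [Set.mem_iUnion, Set.mem_univ, iff_true]
            exact ⟨sigW (initZ z), rfl⟩
          rw [this, Set.inter_univ]
  exact hcalc.symm

end Measure


end OmegaVolAux

open OmegaVolAux

/-- If `P` and `Q` have a common linear extension `σ`, then `Ω(O_P, O_Q)`,
`Ω(O_P, C_Q)` and `Ω(C_P, C_Q)` all have the same `(d+1)`-dimensional volume. -/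
theorem volume_Omega_eq (d : ℕ) (P Q : PartialOrder (Fin d))
    (σ : Equiv.Perm (Fin d))
    (hP : ∀ a b : Fin d, P.lt (σ a) (σ b) → a < b)
    (hQ : ∀ a b : Fin d, Q.lt (σ a) (σ b) → a < b) :
    volume (OmegaPoly (orderPolytope P.le) (orderPolytope Q.le)) =
      volume (OmegaPoly (orderPolytope P.le) (chainPolytope Q.le)) ∧
    volume (OmegaPoly (orderPolytope P.le) (chainPolytope Q.le)) =
      volume (OmegaPoly (chainPolytope P.le) (chainPolytope Q.le)) := by
  classical
  set rk : Fin d → ℕ := fun i => ((σ.symm i : Fin d) : ℕ) with hrkdef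
  have hrk : ∀ i, rk i < d := fun i => (σ.symm i).isLt
  have hinj : Function.Injective rk := by
    intro i j h
    exact σ.symm.injective (Fin.ext h)
  have hP' : ∀ i j, P.lt i j → rk i < rk j := by
    intro i j h
    have h2 : P.lt (σ (σ.symm i)) (σ (σ.symm j)) := by
      rwa [Equiv.apply_symm_apply, Equiv.apply_symm_apply]
    exact hP _ _ h2
  have hQ' : ∀ i j, Q.lt i j → rk i < rk j := by
    intro i j h
    have h2 : Q.lt (σ (σ.symm i)) (σ (σ.symm j)) := by
      rwa [Equiv.apply_symm_apply, Equiv.apply_symm_apply]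
    exact hQ _ _ h2
  have hleP : ∀ i j, P.le i j ↔ P.lt i j ∨ i = j := by
    intro i j
    constructor
    · intro h
      exact @lt_or_eq_of_le (Fin d) P i j h
    · rintro (h | rfl)
      · exact @le_of_lt (Fin d) P.toPreorder i j h
      · exact @le_refl (Fin d) P.toPreorder i
  have hleQ : ∀ i j, Q.le i j ↔ Q.lt i j ∨ i = j := by
    intro i j
    constructor
    · intro h
      exact @lt_or_eq_of_le (Fin d) Q i j h
    · rintro (h | rfl)
      · exact @le_of_lt (Fin d) Q.toPreorder i j h
      · exact @le_refl (Fin d) Q.toPreorder i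
  have htrP : ∀ {i j k : Fin d}, P.lt i j → P.lt j k → P.lt i k :=
    fun {i j k} h1 h2 => @lt_trans (Fin d) P.toPreorder i j k h1 h2
  have htrQ : ∀ {i j k : Fin d}, Q.lt i j → Q.lt j k → Q.lt i k :=
    fun {i j k} h1 h2 => @lt_trans (Fin d) Q.toPreorder i j k h1 h2
  have hQ0 : ∀ i j : Fin d, (fun _ _ : Fin d => False) i j → rk i < rk j :=
    fun i j h => h.elim
  have E1 : OmegaPoly (orderPolytope P.le) (orderPolytope Q.le) = SOset P.le Q.le :=
    OmegaOO_eq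
  have E2 : OmegaPoly (orderPolytope P.le) (chainPolytope Q.le) = SMset P.le Q.lt :=
    OmegaOC_eq hrk hQ' hleQ htrQ
  have E3 : OmegaPoly (chainPolytope P.le) (chainPolytope Q.le) = SCset P.lt Q.lt :=
    OmegaCC_eq hrk hP' hQ' hleP hleQ htrP htrQ
  have T1 : SOset P.le Q.le = Hhat P.lt Q.lt ⁻¹' SCset P.lt Q.lt :=
    TA hrk hP' hQ' hleP hleQ
  have T2 : SMset P.le Q.lt = Hhat P.lt (fun _ _ => False) ⁻¹' SCset P.lt Q.lt :=
    TB hrk hP' hQ' hleP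
  have M1 := measurePreserving_Hhat P.lt Q.lt hrk hinj hP' hQ'
  have M2 := measurePreserving_Hhat P.lt (fun _ _ => False) hrk hinj hP' hQ0
  have hSC : MeasurableSet (SCset P.lt Q.lt) := (isClosed_SCset _ _).measurableSet
  have V1 : volume (OmegaPoly (orderPolytope P.le) (orderPolytope Q.le))
      = volume (SCset P.lt Q.lt) := by
    rw [E1, T1]
    exact M1.measure_preimage hSC.nullMeasurableSet
  have V2 : volume (OmegaPoly (orderPolytope P.le) (chainPolytope Q.le))
      = volume (SCset P.lt Q.lt) := by
    rw [E2, T2]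
    exact M2.measure_preimage hSC.nullMeasurableSet
  have V3 : volume (OmegaPoly (chainPolytope P.le) (chainPolytope Q.le))
      = volume (SCset P.lt Q.lt) := by
    rw [E3]
  exact ⟨V1.trans V2.symm, V2.trans V3.symm⟩
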